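/- arXiv:2203.04862 — 6 statements merged into one kernel-verified Lean document; each statement's English description precedes it below -/
import Mathlib

section
/- Let N be a quantum channel on d×d complex matrices and O a Hermitian d×d matrix. There exists a Hermitian-preserving trace-scaling linear map D on d×d matrices such that the composite M = D∘N satisfies M†(O) = O if and only if O lies in the image of the set of Hermitian d×d matrices under the adjoint map N†. -/
open Matrix
open scoped Kronecker ComplexOrder

abbrev MatC (n : Type*) := Matrix n n ℂ

/-- A linear map on matrices is Hermitian-preserving if it sends Hermitian
matrices to Hermitian matrices. -/
def IsHermitianPreserving {n : Type*} [Fintype n] [DecidableEq n]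
    (M : MatC n →ₗ[ℂ] MatC n) : Prop :=
  ∀ X : MatC n, X.IsHermitian → (M X).IsHermitian

/-- A linear map on matrices is trace-scaling if it scales the trace by a fixed
real factor. -/
def IsTraceScaling {n : Type*} [Fintype n] [DecidableEq n]
    (M : MatC n →ₗ[ℂ] MatC n) : Prop :=
  ∃ p : ℝ, ∀ X : MatC n, (M X).trace = (p : ℂ) * X.trace

/-- The Choi matrix `J_M = Σ_{i,j} |i⟩⟨j| ⊗ M(|i⟩⟨j|)` of a linear map on matrices. -/
def choi {n : Type*} [Fintype n] [DecidableEq n]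
    (M : MatC n →ₗ[ℂ] MatC n) : Matrix (n × n) (n × n) ℂ :=
  Matrix.of fun p q => M (Matrix.single p.1 q.1 1) p.2 q.2

/-- A quantum channel is a completely positive (positive semidefinite Choi matrix)
trace-preserving linear map. -/
def IsQuantumChannel {n : Type*} [Fintype n] [DecidableEq n]
    (M : MatC n →ₗ[ℂ] MatC n) : Prop :=
  (choi M).PosSemidef ∧ ∀ X : MatC n, (M X).trace = X.trace

/-- `Md` is the adjoint of `M` with respect to the Hilbert-Schmidt inner product
`⟨A, B⟩ = tr[A† B]`. -/
def IsAdjointPair {n : Type*} [Fintype n] [DecidableEq n]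
    (M Md : MatC n →ₗ[ℂ] MatC n) : Prop :=
  ∀ A B : MatC n, (Aᴴ * M B).trace = ((Md A)ᴴ * B).trace

/-- A density matrix: positive semidefinite with unit trace. -/
def IsDensityMatrix {n : Type*} [Fintype n] [DecidableEq n] (ρ : MatC n) : Prop :=
  ρ.PosSemidef ∧ ρ.trace = 1

/-- The Hermitian matrices as a real submodule of the complex matrices. -/
noncomputable def hermSubmodule (n : Type*) [Fintype n] [DecidableEq n] :
    Submodule ℝ (MatC n) :=
  selfAdjoint.submodule ℝ (MatC n)

/-- The image of the Hermitian matrices under a (complex-)linear map, as a real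
submodule. -/
noncomputable def hermitianImage {n : Type*} [Fintype n] [DecidableEq n]
    (M : MatC n →ₗ[ℂ] MatC n) : Submodule ℝ (MatC n) :=
  (hermSubmodule n).map (M.restrictScalars ℝ)

namespace Stmt1Aux

variable {d : ℕ}

lemma trace_ct_mul_std (X : MatC (Fin d)) (i j : Fin d) :
    (Xᴴ * Matrix.single i j (1:ℂ)).trace = star (X i j) := by
  simp [Matrix.trace, Matrix.mul_apply, Matrix.single, Matrix.diag,
    Matrix.conjTranspose_apply, ite_and]

lemma eq_of_trace_ct_mul (X Y : MatC (Fin d))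
    (h : ∀ B : MatC (Fin d), (Xᴴ * B).trace = (Yᴴ * B).trace) : X = Y := by
  ext i j
  have := h (Matrix.single i j 1)
  rw [trace_ct_mul_std, trace_ct_mul_std] at this
  exact star_injective this

lemma hp_conjTranspose (D : MatC (Fin d) →ₗ[ℂ] MatC (Fin d))
    (hD : IsHermitianPreserving D) (X : MatC (Fin d)) :
    D Xᴴ = (D X)ᴴ := by
  have hHherm : (X + Xᴴ).IsHermitian := by
    unfold Matrix.IsHermitian; rw [conjTranspose_add, conjTranspose_conjTranspose, add_comm]
  have hKherm : (Complex.I • (X - Xᴴ)).IsHermitian := by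
    unfold Matrix.IsHermitian
    rw [conjTranspose_smul, conjTranspose_sub, conjTranspose_conjTranspose]
    simp only [conjTranspose_smul, smul_sub]
    rw [Complex.star_def, Complex.conj_I]
    module
  have h1 : (D X)ᴴ + (D Xᴴ)ᴴ = D X + D Xᴴ := by
    have := (hD _ hHherm).eq
    rwa [map_add, conjTranspose_add] at this
  have h2 : (D X)ᴴ - (D Xᴴ)ᴴ = D Xᴴ - D X := by
    have e := (hD _ hKherm).eq
    rw [LinearMap.map_smul, map_sub, conjTranspose_smul, conjTranspose_sub] at e
    have e2 := congrArg (fun M => Complex.I • M) e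
    simp only [smul_smul, Complex.I_mul_I, Complex.mul_conj', Complex.normSq_I] at e2
    norm_num at e2
    exact e2
  have h3 : (2:ℂ) • (D X)ᴴ = (2:ℂ) • D Xᴴ := by
    calc (2:ℂ) • (D X)ᴴ = ((D X)ᴴ + (D Xᴴ)ᴴ) + ((D X)ᴴ - (D Xᴴ)ᴴ) := by module
    _ = (D X + D Xᴴ) + (D Xᴴ - D X) := by rw [h1, h2]
    _ = (2:ℂ) • D Xᴴ := by module
  exact (smul_right_injective _ (two_ne_zero) h3).symm

lemma trace_ct_mul_expand (X B : MatC (Fin d)) :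
    (Xᴴ * B).trace = ∑ k, ∑ l, star (X k l) * B k l := by
  rw [Matrix.trace]
  simp only [Matrix.diag, Matrix.mul_apply, Matrix.conjTranspose_apply]
  exact Finset.sum_comm

lemma trace_ct_mul_self (H : MatC (Fin d)) :
    (Hᴴ * H).trace = ((∑ k, ∑ l, Complex.normSq (H k l) : ℝ) : ℂ) := by
  rw [trace_ct_mul_expand]
  push_cast
  refine Finset.sum_congr rfl fun k _ => Finset.sum_congr rfl fun l _ => ?_
  simp only [Complex.star_def]
  rw [← Complex.normSq_eq_conj_mul_self]

lemma star_trace_ct_mul (P X : MatC (Fin d)) (hP : P.IsHermitian) (hX : X.IsHermitian) :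
    star ((Pᴴ * X).trace) = (Pᴴ * X).trace := by
  rw [← Matrix.trace_conjTranspose, Matrix.conjTranspose_mul, Matrix.conjTranspose_conjTranspose,
    hX.eq, Matrix.trace_mul_comm, hP.eq]

lemma std_ct (k l : Fin d) :
    (Matrix.single k l (1:ℂ))ᴴ = Matrix.single l k (1:ℂ) := by
  ext i j
  simp [Matrix.conjTranspose_apply, Matrix.single, and_comm]

end Stmt1Aux

open Stmt1Aux

/-- **Theorem 1** (Necessary and sufficient condition for information preservation).
Given a quantum channel `N` (with Hilbert-Schmidt adjoint `Nd`) and an observable `O`,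
there is a Hermitian-preserving trace-scaling map `D` such that the adjoint of
`M = D ∘ N` fixes `O` if and only if `O` lies in the image of the Hermitian matrices
under `N†`. -/
theorem stmt1 (d : ℕ) (N Nd : MatC (Fin d) →ₗ[ℂ] MatC (Fin d))
    (hN : IsQuantumChannel N) (hNd : IsAdjointPair N Nd)
    (O : MatC (Fin d)) (hO : O.IsHermitian) :
    (∃ D Md : MatC (Fin d) →ₗ[ℂ] MatC (Fin d),
        IsHermitianPreserving D ∧ IsTraceScaling D ∧
        IsAdjointPair (D ∘ₗ N) Md ∧ Md O = O) ↔
      ∃ Q : MatC (Fin d), Q.IsHermitian ∧ Nd Q = O := by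
  classical
  constructor
  · rintro ⟨D, Md, hDH, -, hAdj, hMdO⟩
    set Q : MatC (Fin d) :=
      Matrix.of fun k l => star ((Oᴴ * D (Matrix.single k l 1)).trace) with hQdef
    have hQent : ∀ k l, Q k l = star ((Oᴴ * D (Matrix.single k l 1)).trace) := fun _ _ => rfl
    have key : ∀ B : MatC (Fin d), (Qᴴ * B).trace = (Oᴴ * D B).trace := by
      intro B
      conv_rhs => rw [matrix_eq_sum_single B]
      have : ∀ (i j : Fin d),
          Matrix.single i j (B i j) = B i j • Matrix.single i j (1:ℂ) := by
        intro i j; rw [smul_single, smul_eq_mul, mul_one]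
      simp_rw [this]
      rw [map_sum, Matrix.mul_sum, Matrix.trace_sum]
      simp_rw [map_sum, LinearMap.map_smul, Matrix.mul_sum, Matrix.trace_sum,
        Matrix.mul_smul, Matrix.trace_smul, smul_eq_mul]
      rw [trace_ct_mul_expand]
      refine Finset.sum_congr rfl fun k _ => Finset.sum_congr rfl fun l _ => ?_
      rw [hQent, star_star, mul_comm]
    have hQherm : Q.IsHermitian := by
      show Qᴴ = Q
      ext k l
      rw [Matrix.conjTranspose_apply, hQent, hQent, star_star]
      rw [← Matrix.trace_conjTranspose, Matrix.conjTranspose_mul,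
        Matrix.conjTranspose_conjTranspose, ← hp_conjTranspose D hDH, std_ct,
        Matrix.trace_mul_comm, hO.eq]
    refine ⟨Q, hQherm, eq_of_trace_ct_mul _ _ fun B => ?_⟩
    rw [← hNd Q B, key (N B)]
    have := hAdj O B
    rw [LinearMap.comp_apply] at this
    rw [this, hMdO]
  · rintro ⟨Q, hQ, hNQ⟩
    have hNd1 : Nd 1 = 1 := by
      refine eq_of_trace_ct_mul _ _ fun B => ?_
      rw [← hNd 1 B, Matrix.conjTranspose_one, one_mul, one_mul, hN.2 B]
    by_cases hc : ∃ c : ℝ, O = (c:ℂ) • 1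
    · obtain ⟨c, hcO⟩ := hc
      refine ⟨LinearMap.id, Nd, fun X h => h, ⟨1, fun X => by simp⟩, ?_, ?_⟩
      · rw [LinearMap.id_comp]; exact hNd
      · rw [hcO, LinearMap.map_smul, hNd1]
    · have hd : 0 < d := by
        rcases Nat.eq_zero_or_pos d with h0 | h; swap
        · exact h
        · exfalso; exact hc ⟨0, by subst h0; ext i j; exact i.elim0⟩
      push_neg at hc
      have htrO : star O.trace = O.trace := by
        rw [← Matrix.trace_conjTranspose, hO.eq]
      have htrO' : O.trace = (O.trace.re : ℂ) := (Complex.conj_eq_iff_re.mp htrO).symm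
      set t : ℝ := O.trace.re / d with htdef
      set H : MatC (Fin d) := O - (t:ℂ) • 1 with hHdef
      have hHherm : H.IsHermitian := by
        show Hᴴ = H
        rw [hHdef, Matrix.conjTranspose_sub, Matrix.conjTranspose_smul,
          Matrix.conjTranspose_one, hO.eq, Complex.star_def, Complex.conj_ofReal]
      have hHne : H ≠ 0 := by
        intro h0
        exact hc t (by rw [← sub_eq_zero]; exact h0)
      have htrH : H.trace = 0 := by
        have hdne : (d:ℂ) ≠ 0 := Nat.cast_ne_zero.mpr hd.ne'
        rw [hHdef, Matrix.trace_sub, Matrix.trace_smul, Matrix.trace_one, htrO', htdef]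
        simp only [Fintype.card_fin, smul_eq_mul]
        push_cast
        field_simp
        ring
      set β : ℝ := ∑ k, ∑ l, Complex.normSq (H k l) with hβdef
      have hβ0 : β ≠ 0 := by
        intro h0
        apply hHne
        ext k l
        have hnn : ∀ k ∈ Finset.univ, (0:ℝ) ≤ ∑ l, Complex.normSq (H k l) :=
          fun k _ => Finset.sum_nonneg fun l _ => Complex.normSq_nonneg _
        have h1 := (Finset.sum_eq_zero_iff_of_nonneg hnn).mp h0 k (Finset.mem_univ k)
        have h2 := (Finset.sum_eq_zero_iff_of_nonneg
          (fun l _ => Complex.normSq_nonneg (H k l))).mp h1 l (Finset.mem_univ l)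
        simpa using Complex.normSq_eq_zero.mp h2
      have htrHH : (Hᴴ * H).trace = (β : ℂ) := trace_ct_mul_self H
      set A : MatC (Fin d) := ((β⁻¹ : ℝ) : ℂ) • H with hAdef
      have hAherm : A.IsHermitian := by
        show Aᴴ = A
        rw [hAdef, Matrix.conjTranspose_smul, hHherm.eq, Complex.star_def, Complex.conj_ofReal]
      have htrA : A.trace = 0 := by
        rw [hAdef, Matrix.trace_smul, htrH, smul_zero]
      have htrAO : (Aᴴ * O).trace = 1 := by
        rw [hAherm.eq, hAdef, Matrix.smul_mul, Matrix.trace_smul]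
        have : (H * O).trace = (β : ℂ) := by
          have hOH : O = H + (t:ℂ) • 1 := by rw [hHdef]; module
          have hsplit : H * O = H * H + (t:ℂ) • H := by
            rw [hOH, Matrix.mul_add, Matrix.mul_smul, Matrix.mul_one]
          rw [hsplit, Matrix.trace_add, Matrix.trace_smul, htrH, smul_zero, add_zero]
          nth_rewrite 1 [← hHherm.eq]
          rw [htrHH]
        rw [this, smul_eq_mul]
        norm_cast
        field_simp
      -- the decoding map D
      refine ⟨{ toFun := fun X => (Qᴴ * X).trace • A
                map_add' := by intro X Y; rw [Matrix.mul_add, Matrix.trace_add, add_smul]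
                map_smul' := by
                  intro c X
                  rw [Matrix.mul_smul, Matrix.trace_smul, smul_eq_mul, RingHom.id_apply,
                    mul_smul] },
            { toFun := fun X => (Aᴴ * X).trace • O
              map_add' := by intro X Y; rw [Matrix.mul_add, Matrix.trace_add, add_smul]
              map_smul' := by
                intro c X
                rw [Matrix.mul_smul, Matrix.trace_smul, smul_eq_mul, RingHom.id_apply,
                  mul_smul] },
            ?_, ?_, ?_, ?_⟩
      · intro X hX
        show ((Qᴴ * X).trace • A).IsHermitian
        have hs := star_trace_ct_mul Q X hQ hX
        show ((Qᴴ * X).trace • A)ᴴ = _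
        rw [Matrix.conjTranspose_smul, hAherm.eq, hs]
      · refine ⟨0, fun X => ?_⟩
        show ((Qᴴ * X).trace • A).trace = _
        rw [Matrix.trace_smul, htrA, smul_zero, Complex.ofReal_zero, zero_mul]
      · intro X B
        show (Xᴴ * ((Qᴴ * (N B)).trace • A)).trace = (((Aᴴ * X).trace • O)ᴴ * B).trace
        rw [Matrix.mul_smul, Matrix.trace_smul, Matrix.conjTranspose_smul, Matrix.smul_mul,
          Matrix.trace_smul, smul_eq_mul, smul_eq_mul]
        have h1 : (Qᴴ * (N B)).trace = (Oᴴ * B).trace := by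
          rw [hNd Q B, hNQ]
        have h2 : star ((Aᴴ * X).trace) = (Xᴴ * A).trace := by
          rw [← Matrix.trace_conjTranspose, Matrix.conjTranspose_mul,
            Matrix.conjTranspose_conjTranspose]
        rw [h1, h2, ← hO.eq, mul_comm]
      · show (Aᴴ * O).trace • O = O
        rw [htrAO, one_smul]
end

section
/- A linear map D on d×d complex matrices is Hermitian-preserving and trace-scaling if and only if there exist finitely many quantum channels D_1,…,D_m on d×d matrices and real numbers c_1,…,c_m such that D = Σ_j c_j·D_j. -/
open Matrix
open scoped Kronecker ComplexOrder

/- ===== auxiliary lemmas ===== -/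
section Aux
variable {n : Type*} [Fintype n] [DecidableEq n]
set_option linter.unusedSectionVars false

/-- map reconstructed from a Choi matrix -/
noncomputable def mapOfChoi (J : Matrix (n × n) (n × n) ℂ) : MatC n →ₗ[ℂ] MatC n where
  toFun X := Matrix.of fun p q => ∑ i, ∑ j, X i j * J (i, p) (j, q)
  map_add' X Y := by
    ext p q
    simp [Matrix.add_apply, add_mul, Finset.sum_add_distrib]
  map_smul' c X := by
    ext p q
    simp [Matrix.smul_apply, Finset.mul_sum, mul_assoc, smul_eq_mul]

lemma mapOfChoi_apply (J : Matrix (n × n) (n × n) ℂ) (X : MatC n) (p q : n) :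
    mapOfChoi J X p q = ∑ i, ∑ j, X i j * J (i, p) (j, q) := rfl

lemma choi_mapOfChoi (J : Matrix (n × n) (n × n) ℂ) : choi (mapOfChoi J) = J := by
  ext p q
  simp [choi, mapOfChoi_apply, Matrix.single, ite_and]

lemma mapOfChoi_std (J : Matrix (n × n) (n × n) ℂ) (i j : n) (c : ℂ) :
    mapOfChoi J (Matrix.single i j c) = Matrix.of fun p q => c * J (i, p) (j, q) := by
  ext p q
  rw [mapOfChoi_apply]
  simp [Matrix.single, ite_and]

lemma mapOfChoi_choi (M : MatC n →ₗ[ℂ] MatC n) : mapOfChoi (choi M) = M := by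
  apply LinearMap.ext; intro X
  rw [Matrix.matrix_eq_sum_single X, map_sum, map_sum]
  refine Finset.sum_congr rfl fun i _ => ?_
  rw [map_sum, map_sum]
  refine Finset.sum_congr rfl fun j _ => ?_
  have h : Matrix.single i j (X i j) = X i j • Matrix.single i j (1 : ℂ) := by
    rw [Matrix.smul_single, smul_eq_mul, mul_one]
  rw [h, LinearMap.map_smul, LinearMap.map_smul, mapOfChoi_std]
  ext p q
  simp [choi, smul_eq_mul]

lemma mapOfChoi_sub (J K : Matrix (n × n) (n × n) ℂ) :
    mapOfChoi (J - K) = mapOfChoi J - mapOfChoi K := by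
  apply LinearMap.ext; intro X
  ext p q
  simp [mapOfChoi_apply, Matrix.sub_apply, mul_sub, Finset.sum_sub_distrib]

lemma choi_add (M N : MatC n →ₗ[ℂ] MatC n) : choi (M + N) = choi M + choi N := by
  ext p q; simp [choi]

lemma choi_smul (c : ℂ) (M : MatC n →ₗ[ℂ] MatC n) : choi (c • M) = c • choi M := by
  ext p q; simp [choi]

/-- HP maps commute with conjugate transpose -/
lemma map_conjTranspose_of_hp {M : MatC n →ₗ[ℂ] MatC n}
    (h : ∀ X : MatC n, X.IsHermitian → (M X).IsHermitian) (X : MatC n) :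
    M Xᴴ = (M X)ᴴ := by
  have h1 : (X + Xᴴ).IsHermitian := by
    simp [Matrix.IsHermitian, Matrix.conjTranspose_add, add_comm]
  have h2 : (Complex.I • (X - Xᴴ)).IsHermitian := by
    simp only [Matrix.IsHermitian, Matrix.conjTranspose_smul, Matrix.conjTranspose_sub,
      Matrix.conjTranspose_conjTranspose, Complex.star_def, Complex.conj_I]
    module
  have e1 := h _ h1
  have e2 := h _ h2
  rw [map_add] at e1
  rw [LinearMap.map_smul, map_sub] at e2
  unfold Matrix.IsHermitian at e1 e2
  rw [Matrix.conjTranspose_add] at e1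
  rw [Matrix.conjTranspose_smul, Matrix.conjTranspose_sub, Complex.star_def,
    Complex.conj_I] at e2
  have e2' : (M X)ᴴ - (M Xᴴ)ᴴ = M Xᴴ - M X := by
    have h3 := congrArg (fun Y => Complex.I • Y) e2
    simp only [smul_smul, neg_smul, smul_neg, Complex.I_mul_I, neg_neg, one_smul] at h3
    rw [h3]
    module
  have key : (2:ℂ) • ((M Xᴴ)ᴴ) = (2:ℂ) • (M X) := by
    linear_combination (norm := module) e1 - e2'
  have h2' : (2:ℂ) ≠ 0 := two_ne_zero
  have key2 := smul_right_injective (MatC n) h2' key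
  rw [← key2, Matrix.conjTranspose_conjTranspose]

lemma stdBasis_conjT (i j : n) :
    (Matrix.single i j (1:ℂ))ᴴ = Matrix.single j i 1 := by
  ext a b
  simp [Matrix.single, Matrix.conjTranspose_apply, and_comm]

lemma choi_isHermitian_of_map_conjT {M : MatC n →ₗ[ℂ] MatC n}
    (h : ∀ X : MatC n, M Xᴴ = (M X)ᴴ) : (choi M).IsHermitian := by
  ext p q
  rw [Matrix.conjTranspose_apply]
  show star (choi M q p) = choi M p q
  have : M (Matrix.single p.1 q.1 (1:ℂ)) = (M (Matrix.single q.1 p.1 1))ᴴ := by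
    rw [← h, stdBasis_conjT]
  simp only [choi, Matrix.of_apply]
  rw [this, Matrix.conjTranspose_apply]

lemma mapOfChoi_conjT {J : Matrix (n × n) (n × n) ℂ} (hJ : J.IsHermitian) (X : MatC n) :
    mapOfChoi J Xᴴ = (mapOfChoi J X)ᴴ := by
  ext p q
  rw [Matrix.conjTranspose_apply, mapOfChoi_apply, mapOfChoi_apply]
  simp only [star_sum, star_mul', hJ.apply]
  rw [Finset.sum_comm]
  refine Finset.sum_congr rfl fun i _ => Finset.sum_congr rfl fun j _ => ?_
  rw [Matrix.conjTranspose_apply]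

lemma map_conjT_of_choi_herm {M : MatC n →ₗ[ℂ] MatC n}
    (h : (choi M).IsHermitian) (X : MatC n) : M Xᴴ = (M X)ᴴ := by
  rw [← mapOfChoi_choi M]
  exact mapOfChoi_conjT h X

open scoped MatrixOrder in
lemma posSemidef_iff_eq_conjT_mul_self' {m : Type*} [Fintype m] [DecidableEq m]
    {A : Matrix m m ℂ} : A.PosSemidef ↔ ∃ B : Matrix m m ℂ, A = Bᴴ * B := by
  constructor
  · intro hA
    obtain ⟨B, hB⟩ := CStarAlgebra.nonneg_iff_eq_star_mul_self.mp hA.nonneg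
    exact ⟨B, hB⟩
  · rintro ⟨B, rfl⟩
    exact posSemidef_conjTranspose_mul_self B

/-- positive semidefiniteness of the "entrywise kronecker" matrix -/
lemma posSemidef_kron {B σ : MatC n} (hB : B.PosSemidef) (hσ : σ.PosSemidef) :
    (Matrix.of fun p q : n × n => B p.1 q.1 * σ p.2 q.2).PosSemidef := by
  obtain ⟨C, hC⟩ := posSemidef_iff_eq_conjT_mul_self'.mp hB
  obtain ⟨S, hS⟩ := posSemidef_iff_eq_conjT_mul_self'.mp hσ
  rw [posSemidef_iff_eq_conjT_mul_self']
  refine ⟨Matrix.of fun p q : n × n => C p.1 q.1 * S p.2 q.2, ?_⟩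
  ext p q
  rw [Matrix.of_apply, Matrix.mul_apply, hC, hS, Matrix.mul_apply, Matrix.mul_apply,
    Finset.sum_mul_sum]
  rw [← Finset.sum_product', Finset.univ_product_univ]
  refine Finset.sum_congr rfl fun r _ => ?_
  simp only [Matrix.conjTranspose_apply, Matrix.of_apply, star_mul']
  ring_nf

/-- a nonnegative real multiple of a PSD matrix is PSD -/
lemma posSemidef_real_smul {m : Type*} [Fintype m] {A : Matrix m m ℂ} (hA : A.PosSemidef)
    {r : ℝ} (hr : 0 ≤ r) : ((r : ℂ) • A).PosSemidef := by
  constructor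
  · rw [Matrix.IsHermitian, Matrix.conjTranspose_smul, hA.1]
    congr 1
    simp [Complex.conj_ofReal]
  · intro x
    exact (hA.smul (show (0:ℂ) ≤ (r:ℂ) by exact_mod_cast hr)).2 x

/-- decomposition of a Hermitian matrix into a difference of PSD matrices -/
lemma herm_decomp {m : Type*} [Fintype m] [DecidableEq m] {A : Matrix m m ℂ}
    (hA : A.IsHermitian) :
    ∃ P N : Matrix m m ℂ, P.PosSemidef ∧ N.PosSemidef ∧ A = P - N := by
  let U : Matrix m m ℂ := hA.eigenvectorUnitary
  let μ := hA.eigenvalues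
  refine ⟨U * Matrix.diagonal (fun i => ((max (μ i) 0 : ℝ) : ℂ)) * Uᴴ,
          U * Matrix.diagonal (fun i => ((max (-(μ i)) 0 : ℝ) : ℂ)) * Uᴴ, ?_, ?_, ?_⟩
  · exact (Matrix.PosSemidef.mul_mul_conjTranspose_same
      (Matrix.posSemidef_diagonal_iff.mpr fun i => by
        exact_mod_cast (le_max_right _ _ : (0:ℝ) ≤ max (μ i) 0)) U)
  · exact (Matrix.PosSemidef.mul_mul_conjTranspose_same
      (Matrix.posSemidef_diagonal_iff.mpr fun i => by
        exact_mod_cast (le_max_right _ _ : (0:ℝ) ≤ max (-(μ i)) 0)) U)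
  · have hspec := hA.spectral_theorem
    rw [← Matrix.sub_mul, ← Matrix.mul_sub, Matrix.diagonal_sub]
    have : (fun i => ((max (μ i) 0 : ℝ) : ℂ) - ((max (-(μ i)) 0 : ℝ) : ℂ)) =
        fun i => ((μ i : ℝ) : ℂ) := by
      funext i
      rw [← Complex.ofReal_sub]
      congr 1
      rcases le_total (μ i) 0 with h | h
      · rw [max_eq_right h, max_eq_left (by linarith)]; ring
      · rw [max_eq_left h, max_eq_right (by linarith)]; ring
    rw [this]
    simpa [U, μ, Matrix.star_eq_conjTranspose, Function.comp_def] using hspec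

/-- existence of a scalar dominating a Hermitian matrix -/
lemma exists_smul_one_sub_posSemidef {m : Type*} [Fintype m] [DecidableEq m]
    {A : Matrix m m ℂ} (hA : A.IsHermitian) :
    ∃ l : ℝ, 0 < l ∧ ((l : ℂ) • (1 : Matrix m m ℂ) - A).PosSemidef := by
  let U : Matrix m m ℂ := hA.eigenvectorUnitary
  let μ := hA.eigenvalues
  refine ⟨(∑ i, |μ i|) + 1, by positivity, ?_⟩
  have hU : U * Uᴴ = 1 := by
    have := (Matrix.mem_unitaryGroup_iff).mp hA.eigenvectorUnitary.2
    simpa [U, Matrix.star_eq_conjTranspose] using this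
  set l : ℝ := (∑ i, |μ i|) + 1 with hl
  have h1 : ((l : ℂ)) • (1 : Matrix m m ℂ) =
      U * Matrix.diagonal (fun _ => (l : ℂ)) * Uᴴ := by
    rw [← Matrix.smul_one_eq_diagonal, Matrix.mul_smul, mul_one, Matrix.smul_mul, hU]
  have hspec := hA.spectral_theorem
  have hAeq : A = U * Matrix.diagonal (fun i => ((μ i : ℝ) : ℂ)) * Uᴴ := by
    simpa [U, μ, Matrix.star_eq_conjTranspose, Function.comp_def] using hspec
  rw [h1, hAeq, ← Matrix.sub_mul, ← Matrix.mul_sub, Matrix.diagonal_sub]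
  refine Matrix.PosSemidef.mul_mul_conjTranspose_same
    (Matrix.posSemidef_diagonal_iff.mpr fun i => ?_) U
  rw [← Complex.ofReal_sub]
  rw [Complex.zero_le_real]
  have h2 : μ i ≤ ∑ j, |μ j| := by
    calc μ i ≤ |μ i| := le_abs_self _
    _ ≤ ∑ j, |μ j| := Finset.single_le_sum (fun j _ => abs_nonneg (μ j)) (Finset.mem_univ i)
  simp only [hl]
  linarith

/-- partial trace over the second factor -/
noncomputable def ptr (J : Matrix (n × n) (n × n) ℂ) : MatC n :=
  Matrix.of fun i j => ∑ s, J (i, s) (j, s)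

lemma ptr_sub (J K : Matrix (n × n) (n × n) ℂ) : ptr (J - K) = ptr J - ptr K := by
  ext i j
  simp [ptr, Finset.sum_sub_distrib]

lemma ptr_posSemidef {J : Matrix (n × n) (n × n) ℂ} (hJ : J.PosSemidef) :
    (ptr J).PosSemidef := by
  classical
  let P : n → Matrix (n × n) n ℂ := fun s => Matrix.of fun p i => if p = (i, s) then 1 else 0
  have hentry : ∀ s i j, ((P s)ᴴ * J * (P s)) i j = J (i, s) (j, s) := by
    intro s i j
    rw [Matrix.mul_apply]
    simp only [P, Matrix.of_apply, mul_ite, mul_one, mul_zero, Finset.sum_ite_eq',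
      Finset.mem_univ, if_true]
    rw [Matrix.mul_apply]
    simp [Matrix.conjTranspose_apply, P]
  have hsum : ptr J = ∑ s, (P s)ᴴ * J * (P s) := by
    ext i j
    rw [Matrix.sum_apply]
    simp only [ptr, Matrix.of_apply]
    exact Finset.sum_congr rfl fun s _ => (hentry s i j).symm
  rw [hsum]
  refine Finset.sum_induction _ _ (fun a b ha hb => ha.add hb) ?_ ?_
  · exact Matrix.PosSemidef.zero
  · exact fun s _ => hJ.conjTranspose_mul_mul_same (P s)

/-- the trace-functional map: X ↦ tr(Bᵀ X) • σ -/
noncomputable def Tmap (B σ : MatC n) : MatC n →ₗ[ℂ] MatC n where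
  toFun X := (Bᵀ * X).trace • σ
  map_add' X Y := by
    show (Bᵀ * (X + Y)).trace • σ = (Bᵀ * X).trace • σ + (Bᵀ * Y).trace • σ
    rw [Matrix.mul_add, Matrix.trace_add, add_smul]
  map_smul' c X := by
    show (Bᵀ * (c • X)).trace • σ = (RingHom.id ℂ) c • ((Bᵀ * X).trace • σ)
    rw [Matrix.mul_smul, Matrix.trace_smul, RingHom.id_apply, smul_smul, smul_eq_mul]

lemma Tmap_apply (B σ X : MatC n) : Tmap B σ X = (Bᵀ * X).trace • σ := rfl

lemma trace_B_mul (B X : MatC n) : (Bᵀ * X).trace = ∑ i, ∑ j, X i j * B i j := by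
  rw [Matrix.trace]
  simp only [Matrix.diag_apply, Matrix.mul_apply, Matrix.transpose_apply]
  rw [Finset.sum_comm]
  exact Finset.sum_congr rfl fun i _ => Finset.sum_congr rfl fun j _ => mul_comm _ _

lemma trace_mapOfChoi (J : Matrix (n × n) (n × n) ℂ) (X : MatC n) :
    (mapOfChoi J X).trace = ∑ i, ∑ j, X i j * ptr J i j := by
  rw [Matrix.trace]
  show (∑ s, ∑ i, ∑ j, X i j * J (i, s) (j, s)) = _
  rw [Finset.sum_comm]
  refine Finset.sum_congr rfl fun i _ => ?_
  rw [Finset.sum_comm]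
  refine Finset.sum_congr rfl fun j _ => ?_
  rw [ptr]
  simp [Finset.mul_sum]

lemma trace_Tmap (B σ X : MatC n) :
    (Tmap B σ X).trace = (∑ i, ∑ j, X i j * B i j) * σ.trace := by
  rw [Tmap_apply, Matrix.trace_smul, trace_B_mul, smul_eq_mul]

lemma choi_Tmap (B σ : MatC n) :
    choi (Tmap B σ) = Matrix.of fun p q : n × n => B p.1 q.1 * σ p.2 q.2 := by
  ext p q
  show (Tmap B σ (Matrix.single p.1 q.1 1)) p.2 q.2 = B p.1 q.1 * σ p.2 q.2
  rw [Tmap_apply, trace_B_mul, Matrix.smul_apply, smul_eq_mul]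
  congr 1
  rw [Finset.sum_eq_single p.1]
  · rw [Finset.sum_eq_single q.1]
    · simp [Matrix.single]
    · intro b _ hb; simp [Matrix.single, Ne.symm hb]
    · intro h; exact absurd (Finset.mem_univ _) h
  · intro b _ hb
    rw [Finset.sum_eq_zero]
    intro j _
    simp [Matrix.single, Ne.symm hb]
  · intro h; exact absurd (Finset.mem_univ _) h

lemma Tmap_add_left (B C σ : MatC n) : Tmap (B + C) σ = Tmap B σ + Tmap C σ := by
  apply LinearMap.ext; intro X
  simp only [Tmap_apply, LinearMap.add_apply, Matrix.transpose_add, Matrix.add_mul,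
    Matrix.trace_add, add_smul]

lemma Tmap_sub_left (B C σ : MatC n) : Tmap (B - C) σ = Tmap B σ - Tmap C σ := by
  apply LinearMap.ext; intro X
  simp only [Tmap_apply, LinearMap.sub_apply, Matrix.transpose_sub, Matrix.sub_mul,
    Matrix.trace_sub, sub_smul]

lemma Tmap_smul_left (c : ℂ) (B σ : MatC n) : Tmap (c • B) σ = c • Tmap B σ := by
  apply LinearMap.ext; intro X
  simp only [Tmap_apply, LinearMap.smul_apply, Matrix.transpose_smul, Matrix.smul_mul,
    Matrix.trace_smul, smul_smul, smul_eq_mul]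

lemma Tmap_zero_left (σ : MatC n) : Tmap 0 σ = 0 := by
  apply LinearMap.ext; intro X
  simp [Tmap_apply]

lemma sum_std_mul (a b : n) (C : MatC n) :
    (∑ i, ∑ j, Matrix.single a b (1:ℂ) i j * C i j) = C a b := by
  rw [Finset.sum_eq_single a]
  · rw [Finset.sum_eq_single b]
    · simp [Matrix.single]
    · intro j _ hj; simp [Matrix.single, Ne.symm hj]
    · intro h; exact absurd (Finset.mem_univ _) h
  · intro i _ hi
    rw [Finset.sum_eq_zero]
    intro j _
    simp [Matrix.single, Ne.symm hi]
  · intro h; exact absurd (Finset.mem_univ _) h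

lemma trace_std (a b : n) :
    (Matrix.single a b (1:ℂ)).trace = (1 : MatC n) a b := by
  rw [Matrix.trace]
  rcases eq_or_ne a b with rfl | hab
  · simp [Matrix.single, Matrix.one_apply]
  · rw [Finset.sum_eq_zero, Matrix.one_apply_ne hab]
    intro i _
    simp only [Matrix.diag_apply, Matrix.single, Matrix.of_apply, ite_eq_right_iff,
      and_imp]
    rintro rfl rfl
    exact absurd rfl hab

lemma sum_mul_smul_one (r : ℂ) (X : MatC n) :
    (∑ i, ∑ j, X i j * (r • (1 : MatC n)) i j) = r * X.trace := by
  simp only [Matrix.smul_apply, Matrix.one_apply, smul_eq_mul, mul_ite, mul_one, mul_zero,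
    Finset.sum_ite_eq, Finset.sum_ite_eq', Finset.mem_univ, if_true]
  rw [Matrix.trace, Finset.mul_sum]
  exact Finset.sum_congr rfl fun i _ => mul_comm _ _

end Aux

/-- A linear map on matrices is Hermitian-preserving and trace-scaling if and only if
it is a finite real linear combination of quantum channels. -/
theorem stmt2 (d : ℕ) (D : MatC (Fin d) →ₗ[ℂ] MatC (Fin d)) :
    (IsHermitianPreserving D ∧ IsTraceScaling D) ↔
      ∃ (m : ℕ) (c : Fin m → ℝ) (Dj : Fin m → (MatC (Fin d) →ₗ[ℂ] MatC (Fin d))),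
        (∀ j, IsQuantumChannel (Dj j)) ∧ D = ∑ j, (c j : ℂ) • Dj j := by
  constructor
  · rintro ⟨hHP, p, hp⟩
    by_cases hd : d = 0
    · subst hd
      refine ⟨0, Fin.elim0, Fin.elim0, fun j => j.elim0, ?_⟩
      apply LinearMap.ext; intro X
      ext i j
      exact i.elim0
    · have hdpos : 0 < (d : ℝ) := by
        have := Nat.pos_of_ne_zero hd
        exact_mod_cast this
      have hJ : (choi D).IsHermitian :=
        choi_isHermitian_of_map_conjT (map_conjTranspose_of_hp hHP)
      obtain ⟨P, N, hP, hN, hPN⟩ := herm_decomp hJ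
      have hptrJ : ptr (choi D) = (p : ℂ) • 1 := by
        ext a b
        have h1 := hp (Matrix.single a b 1)
        rw [← mapOfChoi_choi D, trace_mapOfChoi, sum_std_mul, trace_std] at h1
        rw [h1]
        simp [Matrix.smul_apply, smul_eq_mul]
      have hA : ptr P - ptr N = (p : ℂ) • 1 := by rw [← ptr_sub, ← hPN, hptrJ]
      obtain ⟨lp, hlp, hBp⟩ := exists_smul_one_sub_posSemidef (ptr_posSemidef hP).1
      obtain ⟨lm, hlm, hBm⟩ := exists_smul_one_sub_posSemidef (ptr_posSemidef hN).1
      have hlpC : (lp : ℂ) ≠ 0 := by exact_mod_cast hlp.ne'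
      have hlmC : (lm : ℂ) ≠ 0 := by exact_mod_cast hlm.ne'
      set σ : MatC (Fin d) := (((d : ℝ)⁻¹ : ℝ) : ℂ) • 1 with hσdef
      have hσ : σ.PosSemidef := posSemidef_real_smul Matrix.PosSemidef.one (by positivity)
      have hσt : σ.trace = 1 := by
        rw [hσdef, Matrix.trace_smul, Matrix.trace_one, smul_eq_mul]
        push_cast
        rw [Fintype.card_fin]
        field_simp
      set Bp : MatC (Fin d) := (lp : ℂ) • 1 - ptr P with hBpdef
      set Bm : MatC (Fin d) := (lm : ℂ) • 1 - ptr N with hBmdef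
      set L1 := ((lp : ℂ)⁻¹) • (mapOfChoi P + Tmap Bp σ) with hL1
      set L2 := ((lm : ℂ)⁻¹) • (mapOfChoi N + Tmap Bm σ) with hL2
      set L0 := Tmap (1 : MatC (Fin d)) σ with hL0
      have tp_aux : ∀ (Q : Matrix (Fin d × Fin d) (Fin d × Fin d) ℂ) (Bq : MatC (Fin d)) (lq : ℝ), Bq = (lq : ℂ) • 1 - ptr Q →
          ∀ X : MatC (Fin d),
          (∑ i, ∑ j, X i j * ptr Q i j) + (∑ i, ∑ j, X i j * Bq i j)
            = (lq : ℂ) * X.trace := by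
        intro Q Bq lq hBq X
        rw [← sum_mul_smul_one (lq : ℂ) X, ← Finset.sum_add_distrib]
        refine Finset.sum_congr rfl fun i _ => ?_
        rw [← Finset.sum_add_distrib]
        refine Finset.sum_congr rfl fun j _ => ?_
        rw [hBq]
        simp only [Matrix.sub_apply]
        ring
      have hch1 : IsQuantumChannel L1 := by
        constructor
        · rw [hL1, choi_smul, choi_add, choi_mapOfChoi, choi_Tmap, ← Complex.ofReal_inv]
          exact posSemidef_real_smul (hP.add (posSemidef_kron hBp hσ))
            (by positivity)
        · intro X
          rw [hL1, LinearMap.smul_apply, Matrix.trace_smul, LinearMap.add_apply,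
            Matrix.trace_add, trace_mapOfChoi, trace_Tmap, hσt, mul_one,
            tp_aux P Bp lp hBpdef X, smul_eq_mul, ← mul_assoc,
            inv_mul_cancel₀ hlpC, one_mul]
      have hch2 : IsQuantumChannel L2 := by
        constructor
        · rw [hL2, choi_smul, choi_add, choi_mapOfChoi, choi_Tmap, ← Complex.ofReal_inv]
          exact posSemidef_real_smul (hN.add (posSemidef_kron hBm hσ))
            (by positivity)
        · intro X
          rw [hL2, LinearMap.smul_apply, Matrix.trace_smul, LinearMap.add_apply,
            Matrix.trace_add, trace_mapOfChoi, trace_Tmap, hσt, mul_one,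
            tp_aux N Bm lm hBmdef X, smul_eq_mul, ← mul_assoc,
            inv_mul_cancel₀ hlmC, one_mul]
      have hch0 : IsQuantumChannel L0 := by
        constructor
        · rw [hL0, choi_Tmap]
          exact posSemidef_kron Matrix.PosSemidef.one hσ
        · intro X
          rw [hL0, trace_Tmap, hσt, mul_one]
          have h1 := sum_mul_smul_one (1 : ℂ) X
          rw [one_smul] at h1
          rw [h1, one_mul]
      have e1 : (lp : ℂ) • L1 = mapOfChoi P + Tmap Bp σ := by
        rw [hL1, smul_smul, mul_inv_cancel₀ hlpC, one_smul]
      have e2 : (lm : ℂ) • L2 = mapOfChoi N + Tmap Bm σ := by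
        rw [hL2, smul_smul, mul_inv_cancel₀ hlmC, one_smul]
      have hT : Tmap Bp σ - Tmap Bm σ + ((lm : ℂ) - lp + p) • L0 = 0 := by
        rw [hL0, ← Tmap_smul_left, ← Tmap_sub_left, ← Tmap_add_left]
        have hB0 : Bp - Bm + ((lm : ℂ) - lp + p) • (1 : MatC (Fin d)) = 0 := by
          rw [hBpdef, hBmdef]
          linear_combination (norm := module) -hA
        rw [hB0, Tmap_zero_left]
      have hD : D = mapOfChoi P - mapOfChoi N := by
        rw [← mapOfChoi_sub, ← hPN, mapOfChoi_choi]
      refine ⟨3, ![lp, -lm, lm - lp + p], ![L1, L2, L0], ?_, ?_⟩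
      · intro j
        fin_cases j <;> simpa using (by first | exact hch1 | exact hch2 | exact hch0)
      · rw [Fin.sum_univ_three]
        simp only [Matrix.cons_val_zero, Matrix.cons_val_one, Matrix.head_cons,
          Matrix.cons_val_two, Matrix.tail_cons]
        push_cast
        linear_combination (norm := module) hD - e1 + e2 - hT
  · rintro ⟨m, c, Dj, hch, rfl⟩
    constructor
    · intro X hX
      rw [LinearMap.sum_apply]
      refine Finset.sum_induction _ Matrix.IsHermitian
        (fun a b ha hb => ha.add hb) Matrix.isHermitian_zero fun j _ => ?_
      rw [LinearMap.smul_apply]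
      have hherm : ((Dj j) X).IsHermitian := by
        have hconj := map_conjT_of_choi_herm (hch j).1.1 X
        show ((Dj j) X)ᴴ = (Dj j) X
        rw [← hconj, hX.eq]
      show ((c j : ℂ) • (Dj j) X)ᴴ = (c j : ℂ) • (Dj j) X
      rw [Matrix.conjTranspose_smul, hherm.eq]
      congr 1
      exact Complex.conj_ofReal _
    · refine ⟨∑ j, c j, fun X => ?_⟩
      rw [LinearMap.sum_apply, Matrix.trace_sum]
      push_cast
      rw [Finset.sum_mul]
      refine Finset.sum_congr rfl fun j _ => ?_
      rw [LinearMap.smul_apply, Matrix.trace_smul, (hch j).2 X, smul_eq_mul]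
end

section
/- Let M be a quantum channel on d_A×d_A complex matrices and N a quantum channel on d_B×d_B complex matrices, and let M⊗N denote the induced quantum channel on (d_A·d_B)×(d_A·d_B) matrices determined by (M⊗N)(X⊗Y) = M(X)⊗N(Y). Then the effective shadow dimensions multiply: d_s(M⊗N) = d_s(M)·d_s(N); equivalently, ζ(M⊗N) = ζ(M) + ζ(N), where ζ(N) = log(d²/d_s(N)). -/
open Matrix
open scoped Kronecker ComplexOrder

def HC {n : Type*} [Fintype n] [DecidableEq n] (F : MatC n →ₗ[ℂ] MatC n) : Prop :=
  ∀ X : MatC n, F Xᴴ = (F X)ᴴ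

lemma trace_conjTranspose_mul_stdBasis {n : Type*} [Fintype n] [DecidableEq n]
    (A : MatC n) (p q : n) :
    (Aᴴ * Matrix.single p q 1).trace = star (A p q) := by
  simp [Matrix.trace, Matrix.diag, Matrix.mul_apply, Matrix.single,
    Matrix.conjTranspose_apply, ite_and]

lemma ext_of_traces {n : Type*} [Fintype n] [DecidableEq n]
    (A C : MatC n) (h : ∀ B : MatC n, (Aᴴ * B).trace = (Cᴴ * B).trace) : A = C := by
  ext p q
  have := h (Matrix.single p q 1)
  rw [trace_conjTranspose_mul_stdBasis, trace_conjTranspose_mul_stdBasis] at this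
  exact star_injective this

lemma stdBasisMatrix_conjT {n : Type*} [Fintype n] [DecidableEq n] (p q : n) :
    (Matrix.single p q (1:ℂ))ᴴ = Matrix.single q p 1 := by
  ext i j
  simp [Matrix.single, Matrix.conjTranspose_apply, and_comm]

lemma HC_of_std {n : Type*} [Fintype n] [DecidableEq n] (F : MatC n →ₗ[ℂ] MatC n)
    (h : ∀ p q : n, F (Matrix.single q p 1) = (F (Matrix.single p q 1))ᴴ) : HC F := by
  intro X
  have hX : X = ∑ p : n, ∑ q : n, (X p q) • Matrix.single p q (1:ℂ) := by
    conv_lhs => rw [matrix_eq_sum_single X]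
    refine Finset.sum_congr rfl fun p _ => Finset.sum_congr rfl fun q _ => ?_
    rw [smul_single, smul_eq_mul, mul_one]
  calc F Xᴴ = F (∑ p : n, ∑ q : n, star (X p q) • Matrix.single q p (1:ℂ)) := by
        congr 1
        conv_lhs => rw [hX]
        rw [conjTranspose_sum]
        refine Finset.sum_congr rfl fun p _ => ?_
        rw [conjTranspose_sum]
        refine Finset.sum_congr rfl fun q _ => ?_
        rw [conjTranspose_smul, stdBasisMatrix_conjT]
    _ = (F X)ᴴ := by
        conv_rhs => rw [hX]
        simp only [map_sum, conjTranspose_sum]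
        refine Finset.sum_congr rfl fun p _ => ?_
        refine Finset.sum_congr rfl fun q _ => ?_
        rw [LinearMap.map_smul, LinearMap.map_smul, conjTranspose_smul, h]

lemma choi_std {n : Type*} [Fintype n] [DecidableEq n] (M : MatC n →ₗ[ℂ] MatC n)
    (h : (choi M).IsHermitian) (p q : n) :
    M (Matrix.single q p 1) = (M (Matrix.single p q 1))ᴴ := by
  ext i j
  have := h.apply (q, i) (p, j)
  simpa [choi, Matrix.conjTranspose_apply] using this.symm

lemma HC_of_choi {n : Type*} [Fintype n] [DecidableEq n] (M : MatC n →ₗ[ℂ] MatC n)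
    (h : (choi M).IsHermitian) : HC M :=
  HC_of_std M (choi_std M h)

lemma adj_comm {n : Type*} [Fintype n] [DecidableEq n] {M Md : MatC n →ₗ[ℂ] MatC n}
    (hMd : IsAdjointPair M Md) (hHC : HC M) (A B : MatC n) :
    ((Md A) * B).trace = (A * M B).trace := by
  have h1 : ((Md A) * B).trace = star ((Md A)ᴴ * Bᴴ).trace := by
    rw [trace_mul_comm, ← Matrix.trace_conjTranspose, conjTranspose_mul, conjTranspose_conjTranspose]
    rw [conjTranspose_conjTranspose]
  rw [h1, ← hMd A Bᴴ, hHC B]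
  have : Aᴴ * (M B)ᴴ = ((M B) * A)ᴴ := by rw [conjTranspose_mul]
  rw [this, Matrix.trace_conjTranspose, star_star, trace_mul_comm]

lemma HC_adj {n : Type*} [Fintype n] [DecidableEq n] {M Md : MatC n →ₗ[ℂ] MatC n}
    (hMd : IsAdjointPair M Md) (hHC : HC M) : HC Md := by
  intro A
  refine ext_of_traces _ _ fun B => ?_
  rw [← hMd, conjTranspose_conjTranspose, conjTranspose_conjTranspose]
  exact (adj_comm hMd hHC A B).symm

lemma adj_one {n : Type*} [Fintype n] [DecidableEq n] {M Md : MatC n →ₗ[ℂ] MatC n}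
    (hMd : IsAdjointPair M Md) (htr : ∀ X : MatC n, (M X).trace = X.trace) :
    Md 1 = 1 := by
  refine ext_of_traces _ _ fun B => ?_
  rw [← hMd, conjTranspose_one, one_mul, one_mul, htr]

lemma stdBasis_kron {m n : Type*} [Fintype m] [DecidableEq m] [Fintype n] [DecidableEq n]
    (a c : m) (b d : n) :
    Matrix.single (a,b) (c,d) (1:ℂ) = Matrix.single a c 1 ⊗ₖ Matrix.single b d 1 := by
  ext ⟨i,j⟩ ⟨k,l⟩
  simp only [Matrix.single, Matrix.kroneckerMap_apply, Matrix.of_apply, Prod.mk.injEq]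
  by_cases h1 : a = i <;> by_cases h2 : b = j <;> by_cases h3 : c = k <;> by_cases h4 : d = l <;>
    simp [h1, h2, h3, h4]

lemma conjT_kron {m n : Type*} (A : Matrix m m ℂ) (B : Matrix n n ℂ) :
    (A ⊗ₖ B)ᴴ = Aᴴ ⊗ₖ Bᴴ := by
  ext ⟨i,j⟩ ⟨k,l⟩
  simp [Matrix.conjTranspose_apply, Matrix.kroneckerMap_apply, star_mul']

lemma trace_conjT_kron {m n : Type*} [Fintype m] [Fintype n]
    (A X : Matrix m m ℂ) (B Y : Matrix n n ℂ) :
    ((A ⊗ₖ B)ᴴ * (X ⊗ₖ Y)).trace = (Aᴴ * X).trace * (Bᴴ * Y).trace := by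
  rw [conjT_kron, ← Matrix.mul_kronecker_mul, Matrix.trace_kronecker]

lemma Td_kron {dA dB : ℕ}
    {M Md : MatC (Fin dA) →ₗ[ℂ] MatC (Fin dA)}
    {N Nd : MatC (Fin dB) →ₗ[ℂ] MatC (Fin dB)}
    {T Td : MatC (Fin dA × Fin dB) →ₗ[ℂ] MatC (Fin dA × Fin dB)}
    (hMd : IsAdjointPair M Md) (hNd : IsAdjointPair N Nd) (hTd : IsAdjointPair T Td)
    (hT : ∀ (X : MatC (Fin dA)) (Y : MatC (Fin dB)), T (X ⊗ₖ Y) = (M X) ⊗ₖ (N Y))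
    (A : MatC (Fin dA)) (B : MatC (Fin dB)) :
    Td (A ⊗ₖ B) = Md A ⊗ₖ Nd B := by
  ext ⟨p1,p2⟩ ⟨q1,q2⟩
  apply star_injective
  rw [← trace_conjTranspose_mul_stdBasis (Td (A ⊗ₖ B)) (p1,p2) (q1,q2),
      ← trace_conjTranspose_mul_stdBasis (Md A ⊗ₖ Nd B) (p1,p2) (q1,q2),
      ← hTd, stdBasis_kron, hT, trace_conjT_kron, hMd, hNd, trace_conjT_kron]
open Matrix
open scoped Kronecker ComplexOrder

lemma real_smul_eq {n : Type*} (r : ℝ) (X : MatC n) : ((r : ℂ)) • X = r • X := by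
  rw [← algebraMap_smul ℂ r X]; rfl

lemma herm_indep {n ι : Type*} [Fintype n] [DecidableEq n] [Fintype ι]
    (v : ι → MatC n) (hv : ∀ i, (v i)ᴴ = v i)
    (h : LinearIndependent ℝ v) : LinearIndependent ℂ v := by
  rw [Fintype.linearIndependent_iff] at h ⊢
  intro c hc i
  have hstar : ∑ i, star (c i) • v i = 0 := by
    have h2 := congrArg conjTranspose hc
    simpa [conjTranspose_sum, conjTranspose_smul, hv] using h2
  have hre : ∀ i, 2 * (c i).re = 0 := by
    refine h (fun i => 2 * (c i).re) ?_
    have h3 : ∑ i, (c i + star (c i)) • v i = 0 := by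
      simp only [add_smul, Finset.sum_add_distrib, hc, hstar, add_zero]
    calc ∑ i, (2 * (c i).re) • v i
        = ∑ i, (c i + star (c i)) • v i := by
          refine Finset.sum_congr rfl fun j _ => ?_
          rw [← real_smul_eq]
          congr 1
          show ((2 * (c j).re : ℝ) : ℂ) = c j + (starRingEnd ℂ) (c j)
          rw [Complex.add_conj]
      _ = 0 := h3
  have him : ∀ i, 2 * (c i).im = 0 := by
    refine h (fun i => 2 * (c i).im) ?_
    have h3 : ∑ i, ((-Complex.I) * (c i - star (c i))) • v i = 0 := by
      have h4 : ∑ i, (c i - star (c i)) • v i = 0 := by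
        simp only [sub_smul, Finset.sum_sub_distrib, hc, hstar, sub_zero]
      calc ∑ i, ((-Complex.I) * (c i - star (c i))) • v i
          = (-Complex.I) • ∑ i, (c i - star (c i)) • v i := by
            rw [Finset.smul_sum]
            exact Finset.sum_congr rfl fun j _ => by rw [smul_smul]
        _ = 0 := by rw [h4, smul_zero]
    calc ∑ i, (2 * (c i).im) • v i
        = ∑ i, ((-Complex.I) * (c i - star (c i))) • v i := by
          refine Finset.sum_congr rfl fun j _ => ?_
          rw [← real_smul_eq]
          congr 1
          show ((2 * (c j).im : ℝ) : ℂ) = -Complex.I * (c j - (starRingEnd ℂ) (c j))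
          rw [Complex.sub_conj]
          ring_nf
          rw [Complex.I_sq]
          ring
      _ = 0 := h3
  have h1 := hre i; have h2 := him i
  have : c i = 0 := by
    apply Complex.ext <;> simp only [Complex.zero_re, Complex.zero_im] <;> linarith
  exact this

lemma kron_indep {m n ι κ : Type*} [Fintype m] [Fintype n] [Fintype ι] [Fintype κ]
    (a : ι → MatC m) (b : κ → MatC n)
    (ha : LinearIndependent ℂ a) (hb : LinearIndependent ℂ b) :
    LinearIndependent ℂ (fun p : ι × κ => a p.1 ⊗ₖ b p.2) := by
  rw [Fintype.linearIndependent_iff] at ha hb ⊢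
  intro c hc p
  have key : ∀ (y w : n) (i : ι), ∑ j, c (i, j) * b j y w = 0 := by
    intro y w
    refine ha (fun i => ∑ j, c (i, j) * b j y w) ?_
    ext x z
    have h0 := congrFun (congrFun hc (x, y)) (z, w)
    simp only [Matrix.sum_apply, Matrix.smul_apply, Matrix.kroneckerMap_apply,
      Matrix.zero_apply, smul_eq_mul, Fintype.sum_prod_type] at h0 ⊢
    rw [← h0]
    refine Finset.sum_congr rfl fun i _ => ?_
    rw [Finset.sum_mul]
    refine Finset.sum_congr rfl fun j _ => ?_
    ring
  have hj : ∀ j, c (p.1, j) = 0 := by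
    refine hb (fun j => c (p.1, j)) ?_
    ext y w
    simp only [Matrix.sum_apply, Matrix.smul_apply, Matrix.zero_apply, smul_eq_mul]
    exact key y w p.1
  exact hj p.2
lemma mem_hermSubmodule {n : Type*} [Fintype n] [DecidableEq n] (x : MatC n) :
    x ∈ hermSubmodule n ↔ xᴴ = x := by
  show IsSelfAdjoint x ↔ xᴴ = x
  exact ⟨fun h => h, fun h => h⟩

lemma mem_hermitianImage_herm {n : Type*} [Fintype n] [DecidableEq n]
    (F : MatC n →ₗ[ℂ] MatC n) (hF : HC F) {x : MatC n}
    (hx : x ∈ hermitianImage F) : xᴴ = x := by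
  obtain ⟨H, hH, rfl⟩ := hx
  have hHh : Hᴴ = H := (mem_hermSubmodule H).1 hH
  show ((F.restrictScalars ℝ) H)ᴴ = (F.restrictScalars ℝ) H
  simp only [LinearMap.restrictScalars_apply]
  rw [← hF H, hHh]

lemma finrank_herm {n : Type*} [Fintype n] [DecidableEq n]
    (F : MatC n →ₗ[ℂ] MatC n) (hF : HC F) :
    Module.finrank ℂ (LinearMap.range F) = Module.finrank ℝ (hermitianImage F) := by
  classical
  set V := hermitianImage F with hV
  let b := Module.finBasis ℝ V
  set k := Module.finrank ℝ V with hk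
  let v : Fin k → MatC n := fun i => (b i : MatC n)
  have hherm : ∀ i, (v i)ᴴ = v i := fun i => mem_hermitianImage_herm F hF (b i).2
  have hliR : LinearIndependent ℝ v :=
    b.linearIndependent.map' V.subtype (Submodule.ker_subtype V)
  have hliC := herm_indep v hherm hliR
  have hspanR : Submodule.span ℝ (Set.range v) = V := by
    have : Set.range v = V.subtype '' Set.range b := by
      rw [← Set.range_comp]; rfl
    rw [this, ← Submodule.map_span, b.span_eq, Submodule.map_top, Submodule.range_subtype]
  have hsub1 : (V : Set (MatC n)) ⊆ (Submodule.span ℂ (Set.range v) : Set (MatC n)) := by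
    rw [← hspanR]
    exact Submodule.span_subset_span ℝ ℂ _
  have hmemV : ∀ (H : MatC n), Hᴴ = H → F H ∈ V := by
    intro H hH
    exact ⟨H, (mem_hermSubmodule H).2 hH, rfl⟩
  have hspan : Submodule.span ℂ (Set.range v) = LinearMap.range F := by
    apply le_antisymm
    · rw [Submodule.span_le]
      rintro x ⟨i, rfl⟩
      obtain ⟨H, _, hFH⟩ := (b i).2
      exact ⟨H, hFH⟩
    · rintro x ⟨X, rfl⟩
      set H1 := X + Xᴴ with hH1
      set H2 := Complex.I • (Xᴴ - X) with hH2
      have h1 : H1ᴴ = H1 := by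
        simp [hH1, Matrix.conjTranspose_add, add_comm]
      have h2 : H2ᴴ = H2 := by
        rw [hH2, Matrix.conjTranspose_smul, Matrix.conjTranspose_sub,
          Matrix.conjTranspose_conjTranspose]
        simp only [smul_sub, Complex.star_def, Complex.conj_I, neg_smul, neg_sub, sub_smul]
        abel
      have key : (2:ℂ) • F X = F H1 + Complex.I • F H2 := by
        rw [← LinearMap.map_smul F, ← LinearMap.map_smul F, ← map_add]
        congr 1
        rw [hH1, hH2, smul_smul, Complex.I_mul_I, neg_one_smul, two_smul]
        abel
      have hX : F X = (1/2 : ℂ) • (F H1 + Complex.I • F H2) := by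
        rw [← key, smul_smul]
        norm_num
      rw [hX]
      exact Submodule.smul_mem _ _ (Submodule.add_mem _ (hsub1 (hmemV H1 h1))
        (Submodule.smul_mem _ _ (hsub1 (hmemV H2 h2))))
  rw [← hspan, finrank_span_eq_card hliC, Fintype.card_fin]
lemma sum_kron {ι m n : Type*} [Fintype m] [Fintype n] [Fintype ι]
    (f : ι → MatC m) (B : MatC n) :
    (∑ i, f i) ⊗ₖ B = ∑ i, (f i ⊗ₖ B) := by
  ext ⟨x,y⟩ ⟨z,w⟩
  simp [Matrix.kroneckerMap_apply, Matrix.sum_apply, Finset.sum_mul]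

lemma kron_sum {ι m n : Type*} [Fintype m] [Fintype n] [Fintype ι]
    (A : MatC m) (f : ι → MatC n) :
    A ⊗ₖ (∑ i, f i) = ∑ i, (A ⊗ₖ f i) := by
  ext ⟨x,y⟩ ⟨z,w⟩
  simp [Matrix.kroneckerMap_apply, Matrix.sum_apply, Finset.mul_sum]

lemma finrank_range_kron {dA dB : ℕ}
    (Md : MatC (Fin dA) →ₗ[ℂ] MatC (Fin dA))
    (Nd : MatC (Fin dB) →ₗ[ℂ] MatC (Fin dB))
    (Td : MatC (Fin dA × Fin dB) →ₗ[ℂ] MatC (Fin dA × Fin dB))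
    (hkron : ∀ (A : MatC (Fin dA)) (B : MatC (Fin dB)), Td (A ⊗ₖ B) = Md A ⊗ₖ Nd B) :
    Module.finrank ℂ (LinearMap.range Td) =
      Module.finrank ℂ (LinearMap.range Md) * Module.finrank ℂ (LinearMap.range Nd) := by
  classical
  let a := Module.finBasis ℂ (LinearMap.range Md)
  let bb := Module.finBasis ℂ (LinearMap.range Nd)
  let av : Fin (Module.finrank ℂ (LinearMap.range Md)) → MatC (Fin dA) := fun i => (a i : MatC (Fin dA))
  let bv : Fin (Module.finrank ℂ (LinearMap.range Nd)) → MatC (Fin dB) := fun j => (bb j : MatC (Fin dB))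
  have hliA : LinearIndependent ℂ av :=
    a.linearIndependent.map' (LinearMap.range Md).subtype (Submodule.ker_subtype _)
  have hliB : LinearIndependent ℂ bv :=
    bb.linearIndependent.map' (LinearMap.range Nd).subtype (Submodule.ker_subtype _)
  let w : Fin (Module.finrank ℂ (LinearMap.range Md)) × Fin (Module.finrank ℂ (LinearMap.range Nd)) →
      MatC (Fin dA × Fin dB) := fun p => av p.1 ⊗ₖ bv p.2
  have hliW : LinearIndependent ℂ w := kron_indep av bv hliA hliB
  have hco : ∀ (s : Submodule ℂ (MatC (Fin dA))) (u : s) (c : Fin (Module.finrank ℂ s) → ℂ)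
      (e : Fin (Module.finrank ℂ s) → s), (u : MatC (Fin dA)) = 0 → True := fun _ _ _ _ _ => trivial
  have claimS : ∀ (A : MatC (Fin dA)) (B : MatC (Fin dB)),
      Md A ⊗ₖ Nd B ∈ Submodule.span ℂ (Set.range w) := by
    intro A B
    have ha : Md A = ∑ i, a.repr ⟨Md A, LinearMap.mem_range_self Md A⟩ i • av i := by
      have h := a.sum_repr ⟨Md A, LinearMap.mem_range_self Md A⟩
      calc Md A = ((∑ i, a.repr ⟨Md A, LinearMap.mem_range_self Md A⟩ i • a i :
            LinearMap.range Md) : MatC (Fin dA)) := by rw [h]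
        _ = _ := by push_cast; rfl
    have hb : Nd B = ∑ j, bb.repr ⟨Nd B, LinearMap.mem_range_self Nd B⟩ j • bv j := by
      have h := bb.sum_repr ⟨Nd B, LinearMap.mem_range_self Nd B⟩
      calc Nd B = ((∑ j, bb.repr ⟨Nd B, LinearMap.mem_range_self Nd B⟩ j • bb j :
            LinearMap.range Nd) : MatC (Fin dB)) := by rw [h]
        _ = _ := by push_cast; rfl
    rw [ha, hb, sum_kron]
    refine Submodule.sum_mem _ fun i _ => ?_
    rw [kron_sum]
    refine Submodule.sum_mem _ fun j _ => ?_
    rw [Matrix.smul_kronecker, Matrix.kronecker_smul]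
    exact Submodule.smul_mem _ _ (Submodule.smul_mem _ _
      (Submodule.subset_span ⟨(i, j), rfl⟩))
  have hspanW : Submodule.span ℂ (Set.range w) = LinearMap.range Td := by
    apply le_antisymm
    · rw [Submodule.span_le]
      rintro x ⟨⟨i, j⟩, rfl⟩
      obtain ⟨X, hX⟩ := (a i).2
      obtain ⟨Y, hY⟩ := (bb j).2
      exact ⟨X ⊗ₖ Y, by rw [hkron, hX, hY]⟩
    · rintro x ⟨Z, rfl⟩
      have hZ : Td Z = ∑ P : Fin dA × Fin dB, ∑ Q : Fin dA × Fin dB,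
          (Z P Q) • Td (Matrix.single P Q 1) := by
        conv_lhs => rw [matrix_eq_sum_single Z]
        rw [map_sum]
        refine Finset.sum_congr rfl fun P _ => ?_
        rw [map_sum]
        refine Finset.sum_congr rfl fun Q _ => ?_
        rw [← LinearMap.map_smul, smul_single, smul_eq_mul, mul_one]
      rw [hZ]
      refine Submodule.sum_mem _ fun P _ => Submodule.sum_mem _ fun Q _ =>
        Submodule.smul_mem _ _ ?_
      obtain ⟨p1, p2⟩ := P
      obtain ⟨q1, q2⟩ := Q
      rw [stdBasis_kron, hkron]
      exact claimS _ _
  rw [← hspanW, finrank_span_eq_card hliW, Fintype.card_prod, Fintype.card_fin, Fintype.card_fin]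
/-- **Additivity of shadow destructivity.** If `T` is the tensor product channel
`M ⊗ N` (characterized by `T (X ⊗ₖ Y) = M X ⊗ₖ N Y`), then the effective shadow
dimensions multiply, `d_s(M⊗N) = d_s(M)·d_s(N)`; equivalently the shadow
destructivities add, `ζ(M⊗N) = ζ(M) + ζ(N)`. -/
theorem stmt10 (dA dB : ℕ) (hdA : 0 < dA) (hdB : 0 < dB)
    (M Md : MatC (Fin dA) →ₗ[ℂ] MatC (Fin dA))
    (N Nd : MatC (Fin dB) →ₗ[ℂ] MatC (Fin dB))
    (T Td : MatC (Fin dA × Fin dB) →ₗ[ℂ] MatC (Fin dA × Fin dB))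
    (hM : IsQuantumChannel M) (hN : IsQuantumChannel N)
    (hMd : IsAdjointPair M Md) (hNd : IsAdjointPair N Nd) (hTd : IsAdjointPair T Td)
    (hT : ∀ (X : MatC (Fin dA)) (Y : MatC (Fin dB)), T (X ⊗ₖ Y) = (M X) ⊗ₖ (N Y)) :
    Module.finrank ℝ (hermitianImage Td) =
      Module.finrank ℝ (hermitianImage Md) * Module.finrank ℝ (hermitianImage Nd) ∧
    Real.log (((dA * dB) ^ 2 : ℝ) / (Module.finrank ℝ (hermitianImage Td) : ℝ)) =
      Real.log ((dA ^ 2 : ℝ) / (Module.finrank ℝ (hermitianImage Md) : ℝ)) +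
      Real.log ((dB ^ 2 : ℝ) / (Module.finrank ℝ (hermitianImage Nd) : ℝ)) := by
  classical
  -- Hermitian-conjugation-commuting properties
  have hcM : HC M := HC_of_choi M hM.1.1
  have hcN : HC N := HC_of_choi N hN.1.1
  have hcT : HC T := by
    refine HC_of_std T fun p q => ?_
    obtain ⟨a, b⟩ := p
    obtain ⟨c, d⟩ := q
    rw [stdBasis_kron, stdBasis_kron, hT, hT, choi_std M hM.1.1, choi_std N hN.1.1,
      ← conjT_kron]
  have hcMd : HC Md := HC_adj hMd hcM
  have hcNd : HC Nd := HC_adj hNd hcN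
  have hcTd : HC Td := HC_adj hTd hcT
  have hkron := Td_kron hMd hNd hTd hT
  -- the dimension identity
  have hdim : Module.finrank ℝ (hermitianImage Td) =
      Module.finrank ℝ (hermitianImage Md) * Module.finrank ℝ (hermitianImage Nd) := by
    rw [← finrank_herm Md hcMd, ← finrank_herm Nd hcNd, ← finrank_herm Td hcTd]
    exact finrank_range_kron Md Nd Td hkron
  refine ⟨hdim, ?_⟩
  -- positivity of the dimensions
  have honeM : (1 : MatC (Fin dA)) ∈ hermitianImage Md := by
    refine ⟨1, (mem_hermSubmodule 1).2 Matrix.conjTranspose_one, ?_⟩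
    show Md 1 = 1
    exact adj_one hMd hM.2
  have honeN : (1 : MatC (Fin dB)) ∈ hermitianImage Nd := by
    refine ⟨1, (mem_hermSubmodule 1).2 Matrix.conjTranspose_one, ?_⟩
    show Nd 1 = 1
    exact adj_one hNd hN.2
  have hone_ne_A : (1 : MatC (Fin dA)) ≠ 0 := by
    intro h
    have := congrFun (congrFun h ⟨0, hdA⟩) ⟨0, hdA⟩
    simp [Matrix.one_apply] at this
  have hone_ne_B : (1 : MatC (Fin dB)) ≠ 0 := by
    intro h
    have := congrFun (congrFun h ⟨0, hdB⟩) ⟨0, hdB⟩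
    simp [Matrix.one_apply] at this
  have hMpos : 0 < Module.finrank ℝ (hermitianImage Md) := by
    have : Nontrivial (hermitianImage Md) :=
      nontrivial_of_ne ⟨1, honeM⟩ 0 (fun h => hone_ne_A (congrArg Subtype.val h))
    exact Module.finrank_pos
  have hNpos : 0 < Module.finrank ℝ (hermitianImage Nd) := by
    have : Nontrivial (hermitianImage Nd) :=
      nontrivial_of_ne ⟨1, honeN⟩ 0 (fun h => hone_ne_B (congrArg Subtype.val h))
    exact Module.finrank_pos
  -- the log identity
  have hxm : ((Module.finrank ℝ (hermitianImage Md) : ℝ)) ≠ 0 := by positivity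
  have hxn : ((Module.finrank ℝ (hermitianImage Nd) : ℝ)) ≠ 0 := by positivity
  have hda : (dA : ℝ) ≠ 0 := Nat.cast_ne_zero.2 hdA.ne'
  have hdb : (dB : ℝ) ≠ 0 := Nat.cast_ne_zero.2 hdB.ne'
  have hsplit : (((dA * dB) ^ 2 : ℝ)) / (Module.finrank ℝ (hermitianImage Td) : ℝ) =
      ((dA ^ 2 : ℝ) / (Module.finrank ℝ (hermitianImage Md) : ℝ)) *
      ((dB ^ 2 : ℝ) / (Module.finrank ℝ (hermitianImage Nd) : ℝ)) := by
    rw [hdim]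
    push_cast
    field_simp
  rw [hsplit, Real.log_mul (by positivity) (by positivity)]
end

section
/- Let D be a Hermitian-preserving trace-scaling linear map on d×d complex matrices, and define γ_min(D) as the infimum of Σ_j |c_j| over all decompositions D = Σ_j c_j·D_j into finitely many quantum channels D_j with real coefficients c_j. Then γ_min(D) equals the infimum of |c_1| + |c_2| over all decompositions D = c_1·D_1 + c_2·D_2 into exactly two quantum channels D_1, D_2 with real coefficients c_1, c_2; moreover, any decomposition achieving γ_min(D) can be converted, without increasing Σ_j |c_j|, into a two-channel decomposition in which c_1 ≥ 0 and c_2 ≤ 0. -/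
open Matrix
open scoped Kronecker ComplexOrder

/-- The set of costs `Σ_j |c_j|` of decompositions of `D` into finitely many quantum
channels with real coefficients. -/
def decompCosts {n : Type*} [Fintype n] [DecidableEq n]
    (D : MatC n →ₗ[ℂ] MatC n) : Set ℝ :=
  {s | ∃ (m : ℕ) (c : Fin m → ℝ) (Dj : Fin m → (MatC n →ₗ[ℂ] MatC n)),
    (∀ j, IsQuantumChannel (Dj j)) ∧ D = ∑ j, (c j : ℂ) • Dj j ∧ s = ∑ j, |c j|}

/-- The set of costs `|c₁| + |c₂|` of decompositions of `D` into exactly two quantum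
channels with real coefficients. -/
def twoDecompCosts {n : Type*} [Fintype n] [DecidableEq n]
    (D : MatC n →ₗ[ℂ] MatC n) : Set ℝ :=
  {s | ∃ (c₁ c₂ : ℝ) (D₁ D₂ : MatC n →ₗ[ℂ] MatC n),
    IsQuantumChannel D₁ ∧ IsQuantumChannel D₂ ∧
    D = (c₁ : ℂ) • D₁ + (c₂ : ℂ) • D₂ ∧ s = |c₁| + |c₂|}

section Aux

variable {n : Type*} [Fintype n] [DecidableEq n]

lemma choi_id : choi (LinearMap.id : MatC n →ₗ[ℂ] MatC n) =
    Matrix.of fun p q : n × n =>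
      if p.1 = p.2 ∧ q.1 = q.2 then (1 : ℂ) else 0 := by
  ext ⟨p1, p2⟩ ⟨q1, q2⟩
  simp [choi, Matrix.single, eq_comm]

lemma isQuantumChannel_id : IsQuantumChannel (LinearMap.id : MatC n →ₗ[ℂ] MatC n) := by
  constructor
  · rw [choi_id]
    refine Matrix.PosSemidef.of_dotProduct_mulVec_nonneg ?_ ?_
    · ext ⟨p1, p2⟩ ⟨q1, q2⟩
      by_cases h1 : q1 = q2 <;> by_cases h2 : p1 = p2 <;>
        simp [Matrix.conjTranspose_apply, h1, h2]
    · intro x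
      have key : (Matrix.of fun p q : n × n =>
          if p.1 = p.2 ∧ q.1 = q.2 then (1 : ℂ) else 0) *ᵥ x =
          fun p => if p.1 = p.2 then (∑ q : n × n, if q.1 = q.2 then x q else 0) else 0 := by
        funext p
        by_cases hp : p.1 = p.2 <;>
          simp [Matrix.mulVec, dotProduct, hp, ite_and, Finset.sum_ite, mul_comm]
      rw [key]
      set S : ℂ := ∑ q : n × n, if q.1 = q.2 then x q else 0 with hS
      have : (star x) ⬝ᵥ (fun p : n × n => if p.1 = p.2 then S else 0) =
          star S * S := by
        simp only [dotProduct, Pi.star_apply, mul_ite, mul_zero]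
        have e1 : (∑ p : n × n, if p.1 = p.2 then star (x p) * S else 0)
            = (∑ p : n × n, (if p.1 = p.2 then star (x p) else 0)) * S := by
          rw [Finset.sum_mul]
          apply Finset.sum_congr rfl
          intro p _
          split <;> simp
        rw [e1]
        congr 1
        rw [hS, star_sum]
        apply Finset.sum_congr rfl
        intro q _
        split <;> simp
      rw [this]
      exact star_mul_self_nonneg _
  · intro X; rfl

lemma choi_sum_smul {m : ℕ} (w : Fin m → ℝ) (Dj : Fin m → (MatC n →ₗ[ℂ] MatC n)) :
    choi (∑ j, (w j : ℂ) • Dj j) = ∑ j, (w j : ℂ) • choi (Dj j) := by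
  ext p q
  simp [choi, LinearMap.sum_apply, LinearMap.smul_apply, Matrix.sum_apply]

lemma posSemidef_real_smul_s12 {A : Matrix n n ℂ} (hA : A.PosSemidef) {c : ℝ} (hc : 0 ≤ c) :
    ((c : ℂ) • A).PosSemidef := by
  refine Matrix.PosSemidef.of_dotProduct_mulVec_nonneg ?_ ?_
  · unfold Matrix.IsHermitian
    rw [Matrix.conjTranspose_smul, hA.isHermitian.eq]
    congr 1
    simp
  · intro x
    rw [Matrix.smul_mulVec, dotProduct_smul, smul_eq_mul]
    exact mul_nonneg (by exact_mod_cast hc) (hA.dotProduct_mulVec_nonneg x)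

lemma posSemidef_sum {ι : Type*} (s : Finset ι) (f : ι → Matrix n n ℂ)
    (h : ∀ i ∈ s, (f i).PosSemidef) : (∑ i ∈ s, f i).PosSemidef := by
  classical
  induction s using Finset.induction_on with
  | empty => simpa using Matrix.PosSemidef.zero
  | insert _ _ hi ih =>
      rw [Finset.sum_insert hi]
      exact (h _ (Finset.mem_insert_self _ _)).add
        (ih fun i hi' => h i (Finset.mem_insert_of_mem hi'))

/-- A nonneg real combination of channels is a nonneg multiple of a channel. -/
lemma sum_nonneg_smul_channel {m : ℕ} (w : Fin m → ℝ) (hw : ∀ j, 0 ≤ w j)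
    (Dj : Fin m → (MatC n →ₗ[ℂ] MatC n)) (hQ : ∀ j, IsQuantumChannel (Dj j)) :
    ∃ E : MatC n →ₗ[ℂ] MatC n, IsQuantumChannel E ∧
      (∑ j, (w j : ℂ) • Dj j) = ((∑ j, w j : ℝ) : ℂ) • E := by
  set s : ℝ := ∑ j, w j with hs
  by_cases hs0 : s = 0
  · refine ⟨LinearMap.id, isQuantumChannel_id, ?_⟩
    have hall : ∀ j ∈ Finset.univ, w j = 0 := by
      intro j _
      exact le_antisymm (by
        by_contra h
        push_neg at h
        have : 0 < s := lt_of_lt_of_le h (Finset.single_le_sum (fun i _ => hw i) (Finset.mem_univ j))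
        exact this.ne' hs0) (hw j)
    rw [hs0]
    simp only [Complex.ofReal_zero, zero_smul]
    apply Finset.sum_eq_zero
    intro j hj
    rw [hall j hj]
    simp
  · have hspos : 0 < s := lt_of_le_of_ne (Finset.sum_nonneg fun j _ => hw j) (Ne.symm hs0)
    refine ⟨((s⁻¹ : ℝ) : ℂ) • ∑ j, (w j : ℂ) • Dj j, ⟨?_, ?_⟩, ?_⟩
    · have : choi (((s⁻¹ : ℝ) : ℂ) • ∑ j, (w j : ℂ) • Dj j) =
          ((s⁻¹ : ℝ) : ℂ) • ∑ j, (w j : ℂ) • choi (Dj j) := by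
        rw [← choi_sum_smul]
        ext p q
        simp [choi, LinearMap.smul_apply]
      rw [this]
      apply posSemidef_real_smul_s12 _ (by positivity)
      exact posSemidef_sum _ _ fun j _ => posSemidef_real_smul_s12 (hQ j).1 (hw j)
    · intro X
      simp only [LinearMap.smul_apply, LinearMap.sum_apply, Matrix.trace_smul,
        Matrix.trace_sum]
      have h1 : ∀ x ∈ (Finset.univ : Finset (Fin m)),
          (w x : ℂ) • ((Dj x) X).trace = (w x : ℂ) * X.trace := by
        intro x _; rw [(hQ x).2 X, smul_eq_mul]
      rw [Finset.sum_congr rfl h1, ← Finset.sum_mul, smul_eq_mul, ← mul_assoc]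
      have h2 : (∑ x : Fin m, (w x : ℂ)) = ((s : ℝ) : ℂ) := by
        rw [hs]; push_cast; ring
      rw [h2, ← Complex.ofReal_mul, inv_mul_cancel₀ hs0]
      simp
    · rw [smul_smul, ← Complex.ofReal_mul, mul_inv_cancel₀ hs0]
      simp

/-- Any finite decomposition of a map into channels can be turned into a
two-channel decomposition with `c₁ ≥ 0 ≥ c₂` without increasing the cost. -/
lemma two_decomp {m : ℕ} (c : Fin m → ℝ) (Dj : Fin m → (MatC n →ₗ[ℂ] MatC n))
    (hQ : ∀ j, IsQuantumChannel (Dj j)) (D : MatC n →ₗ[ℂ] MatC n)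
    (hD : D = ∑ j, (c j : ℂ) • Dj j) :
    ∃ (c₁ c₂ : ℝ) (D₁ D₂ : MatC n →ₗ[ℂ] MatC n),
      IsQuantumChannel D₁ ∧ IsQuantumChannel D₂ ∧
      D = (c₁ : ℂ) • D₁ + (c₂ : ℂ) • D₂ ∧
      |c₁| + |c₂| ≤ ∑ j, |c j| ∧ 0 ≤ c₁ ∧ c₂ ≤ 0 := by
  obtain ⟨E₁, hE₁, h1⟩ := sum_nonneg_smul_channel (fun j => max (c j) 0)
    (fun j => le_max_right _ _) Dj hQ
  obtain ⟨E₂, hE₂, h2⟩ := sum_nonneg_smul_channel (fun j => max (-(c j)) 0)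
    (fun j => le_max_right _ _) Dj hQ
  set a : ℝ := ∑ j, max (c j) 0 with ha
  set b : ℝ := ∑ j, max (-(c j)) 0 with hb
  have hanon : 0 ≤ a := Finset.sum_nonneg fun j _ => le_max_right _ _
  have hbnon : 0 ≤ b := Finset.sum_nonneg fun j _ => le_max_right _ _
  refine ⟨a, -b, E₁, E₂, hE₁, hE₂, ?_, ?_, hanon, neg_nonpos.mpr hbnon⟩
  · have key : D = (∑ j, ((max (c j) 0 : ℝ) : ℂ) • Dj j) -
        (∑ j, ((max (-(c j)) 0 : ℝ) : ℂ) • Dj j) := by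
      rw [hD, ← Finset.sum_sub_distrib]
      apply Finset.sum_congr rfl
      intro j _
      have hc : (c j : ℂ) = ((max (c j) 0 : ℝ) : ℂ) - ((max (-(c j)) 0 : ℝ) : ℂ) := by
        rw [← Complex.ofReal_sub]
        congr 1
        rcases le_total (c j) 0 with h | h
        · rw [max_eq_right h, max_eq_left (by linarith)]; ring
        · rw [max_eq_left h, max_eq_right (by linarith)]; ring
      rw [hc]
      exact sub_smul (((max (c j) 0 : ℝ)) : ℂ) (((max (-(c j)) 0 : ℝ)) : ℂ) (Dj j)
    rw [key, h1, h2]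
    push_cast
    module
  · have : |a| + |-b| = a + b := by
      rw [abs_neg, abs_of_nonneg hanon, abs_of_nonneg hbnon]
    rw [this, ha, hb, ← Finset.sum_add_distrib]
    apply le_of_eq
    apply Finset.sum_congr rfl
    intro j _
    rcases le_total (c j) 0 with h | h
    · rw [max_eq_right h, max_eq_left (by linarith), abs_of_nonpos h]; ring
    · rw [max_eq_left h, max_eq_right (by linarith), abs_of_nonneg h]; ring

end Aux

/-- The simulation cost `γ_min(D)` of an HPTS map, defined as an infimum over
arbitrary finite decompositions into channels, is achieved among two-channel
decompositions; moreover any decomposition achieving `γ_min(D)` can be converted,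
without increasing the cost, into a two-channel decomposition with `c₁ ≥ 0 ≥ c₂`. -/
theorem stmt12 (d : ℕ) (D : MatC (Fin d) →ₗ[ℂ] MatC (Fin d))
    (hHP : IsHermitianPreserving D) (hTS : IsTraceScaling D) :
    sInf (decompCosts D) = sInf (twoDecompCosts D) ∧
    ∀ (m : ℕ) (c : Fin m → ℝ) (Dj : Fin m → (MatC (Fin d) →ₗ[ℂ] MatC (Fin d))),
      (∀ j, IsQuantumChannel (Dj j)) → D = ∑ j, (c j : ℂ) • Dj j →
      (∑ j, |c j|) = sInf (decompCosts D) →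
      ∃ (c₁ c₂ : ℝ) (D₁ D₂ : MatC (Fin d) →ₗ[ℂ] MatC (Fin d)),
        IsQuantumChannel D₁ ∧ IsQuantumChannel D₂ ∧
        D = (c₁ : ℂ) • D₁ + (c₂ : ℂ) • D₂ ∧
        |c₁| + |c₂| ≤ ∑ j, |c j| ∧ 0 ≤ c₁ ∧ c₂ ≤ 0 := by
  have hsub : twoDecompCosts D ⊆ decompCosts D := by
    rintro s ⟨c₁, c₂, D₁, D₂, hQ₁, hQ₂, hDeq, hs⟩
    refine ⟨2, ![c₁, c₂], ![D₁, D₂], ?_, ?_, ?_⟩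
    · intro j; fin_cases j <;> simpa
    · rw [hDeq, Fin.sum_univ_two]; simp
    · rw [hs, Fin.sum_univ_two]; simp
  have hdom : ∀ s ∈ decompCosts D, ∃ t ∈ twoDecompCosts D, t ≤ s := by
    rintro s ⟨m, c, Dj, hQ, hDeq, hs⟩
    obtain ⟨c₁, c₂, D₁, D₂, h₁, h₂, heq, hle, _, _⟩ := two_decomp c Dj hQ D hDeq
    exact ⟨|c₁| + |c₂|, ⟨c₁, c₂, D₁, D₂, h₁, h₂, heq, rfl⟩, hs ▸ hle⟩
  have hbddA : BddBelow (decompCosts D) := by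
    refine ⟨0, ?_⟩
    rintro s ⟨m, c, Dj, _, _, hs⟩
    exact hs ▸ Finset.sum_nonneg fun j _ => abs_nonneg _
  have hbddB : BddBelow (twoDecompCosts D) := hbddA.mono hsub
  constructor
  · by_cases hA : (decompCosts D).Nonempty
    · obtain ⟨s, hsA⟩ := hA
      obtain ⟨t, htB, _⟩ := hdom s hsA
      apply le_antisymm
      · exact csInf_le_csInf hbddA ⟨t, htB⟩ hsub
      · apply le_csInf ⟨s, hsA⟩
        intro u huA
        obtain ⟨v, hvB, hvu⟩ := hdom u huA
        exact le_trans (csInf_le hbddB hvB) hvu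
    · have hAe : decompCosts D = ∅ := Set.not_nonempty_iff_eq_empty.mp hA
      have hBe : twoDecompCosts D = ∅ :=
        Set.eq_empty_of_subset_empty (hAe ▸ hsub)
      rw [hAe, hBe]
  · intro m c Dj hQ hDeq _
    exact two_decomp c Dj hQ D hDeq
end

section
/- Let 0 ≤ ε < 1, 0 ≤ p ≤ 1, and let N be the single-qubit generalized amplitude damping channel N(ρ) = Σ_{i=0}^{3} E_i ρ E_i† with Kraus operators E_0 = √p·diag(1, √(1−ε)), E_1 = √p·√ε·|0⟩⟨1|, E_2 = √(1−p)·diag(√(1−ε), 1), E_3 = √(1−p)·√ε·|1⟩⟨0|. Let O be the Pauli matrix X or Y. Define the linear map D on 2×2 matrices by D(σ) = (1/(2√(1−ε)))·O·tr[σ·O]; equivalently, D = c_1·D_1 + c_2·D_2 with c_1 = −c_2 = 1/(2√(1−ε)) and channels D_1, D_2 whose Choi matrices are J_{D_1} = (1/2)O^T⊗O + (1/2)I⊗I and J_{D_2} = −(1/2)O^T⊗O + (1/2)I⊗I. Then D_1 and D_2 are quantum channels and tr[D(N(ρ))·O] = tr[ρ·O] for every 2×2 matrix ρ, so D is a valid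 retriever with cost |c_1| + |c_2| = 1/√(1−ε). -/
open Matrix
open scoped Kronecker ComplexOrder

/-- The linear map `ρ ↦ Σ_i E_i ρ E_i†` given by a finite family of Kraus operators. -/
noncomputable def krausMap {n : Type*} [Fintype n] {k : ℕ} (E : Fin k → Matrix n n ℂ) :
    MatC n →ₗ[ℂ] MatC n where
  toFun ρ := ∑ i, E i * ρ * (E i)ᴴ
  map_add' ρ σ := by
    simp [Matrix.mul_add, Matrix.add_mul, Finset.sum_add_distrib]
  map_smul' c ρ := by
    simp [Matrix.mul_smul, Matrix.smul_mul, Finset.smul_sum]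

/-- The Pauli X matrix. -/
def PauliX : MatC (Fin 2) := !![0, 1; 1, 0]

/-- The Pauli Y matrix. -/
def PauliY : MatC (Fin 2) := !![0, -Complex.I; Complex.I, 0]

/-- The Pauli Z matrix. -/
def PauliZ : MatC (Fin 2) := !![1, 0; 0, -1]

/-- The Kraus operators of the single-qubit generalized amplitude damping channel
with damping factor `ε` and temperature indicator `p`. -/
noncomputable def gadKraus (p ε : ℝ) : Fin 4 → MatC (Fin 2) :=
  ![(Real.sqrt p : ℂ) • !![1, 0; 0, (Real.sqrt (1 - ε) : ℂ)],
    ((Real.sqrt p * Real.sqrt ε : ℝ) : ℂ) • !![0, 1; 0, 0],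
    (Real.sqrt (1 - p) : ℂ) • !![(Real.sqrt (1 - ε) : ℂ), 0; 0, 1],
    ((Real.sqrt (1 - p) * Real.sqrt ε : ℝ) : ℂ) • !![0, 0; 1, 0]]

/-- The single-qubit generalized amplitude damping channel. -/
noncomputable def gad (p ε : ℝ) : MatC (Fin 2) →ₗ[ℂ] MatC (Fin 2) :=
  krausMap (gadKraus p ε)

/-- The set of costs `|c₁| + |c₂|` over all two-channel retrievers for the shadow
information `tr[ρ O]` through the noisy channel `N`: real numbers `c₁, c₂` and
quantum channels `D₁, D₂` such that `D = c₁·D₁ + c₂·D₂` satisfies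
`tr[D(N(ρ))·O] = tr[ρ·O]` for every density matrix `ρ`. -/
def retrCosts {n : Type*} [Fintype n] [DecidableEq n]
    (N : MatC n →ₗ[ℂ] MatC n) (O : MatC n) : Set ℝ :=
  {s | ∃ (c₁ c₂ : ℝ) (D₁ D₂ : MatC n →ₗ[ℂ] MatC n),
    IsQuantumChannel D₁ ∧ IsQuantumChannel D₂ ∧
    (∀ ρ : MatC n, IsDensityMatrix ρ →
      ((((c₁ : ℂ) • D₁ + (c₂ : ℂ) • D₂) (N ρ)) * O).trace = (ρ * O).trace) ∧
    s = |c₁| + |c₂|}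

noncomputable def Dmap (O : MatC (Fin 2)) (a : ℂ) : MatC (Fin 2) →ₗ[ℂ] MatC (Fin 2) where
  toFun σ := a • ((σ * O).trace • O) + (1/2 : ℂ) • (σ.trace • (1 : MatC (Fin 2)))
  map_add' σ τ := by
    simp [Matrix.add_mul, Matrix.trace_add, add_smul, smul_add]
    abel
  map_smul' c σ := by
    simp [Matrix.smul_mul, smul_smul]
    ring_nf

lemma choi_Dmap (O : MatC (Fin 2)) (a : ℂ) :
    choi (Dmap O a) = a • (Oᵀ ⊗ₖ O) + (1/2:ℂ) • ((1:MatC (Fin 2)) ⊗ₖ (1:MatC (Fin 2))) := by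
  ext ⟨i,j⟩ ⟨k,l⟩
  simp [choi, Dmap, Matrix.kroneckerMap_apply, Matrix.trace, Matrix.diag,
    Matrix.mul_apply, Fin.sum_univ_two, Matrix.single, Matrix.one_apply,
    Matrix.transpose_apply]

  fin_cases i <;> fin_cases k <;> by_cases h : j = l <;> simp [h]
lemma Dmap_channel (O : MatC (Fin 2)) (a : ℂ) (ha : a = 1/2 ∨ a = -(1/2))
    (hOO : O * O = 1) (hKH : ((Oᵀ ⊗ₖ O : Matrix (Fin 2 × Fin 2) (Fin 2 × Fin 2) ℂ))ᴴ = Oᵀ ⊗ₖ O)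
    (htr : O.trace = 0) : IsQuantumChannel (Dmap O a) := by
  constructor
  · set K : Matrix (Fin 2 × Fin 2) (Fin 2 × Fin 2) ℂ := Oᵀ ⊗ₖ O with hK
    have hJ : choi (Dmap O a) = a • K + (1/2:ℂ) • (1 : Matrix (Fin 2 × Fin 2) (Fin 2 × Fin 2) ℂ) := by
      rw [choi_Dmap, Matrix.one_kronecker_one]
    have hKK : K * K = 1 := by
      rw [hK, ← Matrix.mul_kronecker_mul, ← Matrix.transpose_mul, hOO, Matrix.transpose_one,
        Matrix.one_kronecker_one]
    have hherm : (choi (Dmap O a))ᴴ = choi (Dmap O a) := by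
      rw [hJ]
      have haR : (starRingEnd ℂ) a = a := by rcases ha with h | h <;> subst h <;> norm_num [Complex.ext_iff]
      simp [Matrix.conjTranspose_add, Matrix.conjTranspose_smul, hKH, haR,
        Complex.conj_ofNat]
    have hidem : choi (Dmap O a) * choi (Dmap O a) = choi (Dmap O a) := by
      rw [hJ]
      rw [Matrix.add_mul, Matrix.mul_add, Matrix.mul_add, Matrix.smul_mul, Matrix.smul_mul,
        Matrix.smul_mul, Matrix.smul_mul, Matrix.mul_smul, Matrix.mul_smul, Matrix.mul_smul,
        Matrix.mul_smul, hKK, Matrix.mul_one, Matrix.one_mul, Matrix.one_mul]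
      rw [smul_smul, smul_smul, smul_smul]
      rcases ha with h | h <;> subst h <;> norm_num <;> module
    have := Matrix.posSemidef_conjTranspose_mul_self (choi (Dmap O a))
    rwa [hherm, hidem] at this
  · intro X
    simp [Dmap, Matrix.trace_add, Matrix.trace_smul, htr, Matrix.trace_one]
    ring
lemma pauli_facts (O : MatC (Fin 2)) (hO : O = PauliX ∨ O = PauliY) :
    O * O = 1 ∧ ((Oᵀ ⊗ₖ O : Matrix (Fin 2 × Fin 2) (Fin 2 × Fin 2) ℂ))ᴴ = Oᵀ ⊗ₖ O ∧
    O.trace = 0 := by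
  refine ⟨?_, ?_, ?_⟩
  · ext i j
    rcases hO with h | h <;> subst h <;> fin_cases i <;> fin_cases j <;>
      simp [PauliX, PauliY, Matrix.mul_apply, Fin.sum_univ_two, Matrix.one_apply]
  · ext ⟨i, j⟩ ⟨k, l⟩
    rcases hO with h | h <;> subst h <;>
      fin_cases i <;> fin_cases j <;> fin_cases k <;> fin_cases l <;>
      simp [PauliX, PauliY, Matrix.conjTranspose_apply, Matrix.kroneckerMap_apply,
        Matrix.transpose_apply, Matrix.vecHead, Matrix.transpose]
  · rcases hO with h | h <;> subst h <;>
      simp [PauliX, PauliY, Matrix.trace, Matrix.diag, Fin.sum_univ_two]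
lemma gad_trace (p ε : ℝ) (hp0 : 0 ≤ p) (hp1 : p ≤ 1) (O : MatC (Fin 2))
    (hO : O = PauliX ∨ O = PauliY) (ρ : MatC (Fin 2)) :
    (gad p ε ρ * O).trace = (Real.sqrt (1 - ε) : ℂ) * (ρ * O).trace := by
  have ha : (Real.sqrt p : ℂ) * (Real.sqrt p : ℂ) = (p : ℂ) := by
    rw [← Complex.ofReal_mul, Real.mul_self_sqrt hp0]
  have hb : (Real.sqrt (1 - p) : ℂ) * (Real.sqrt (1 - p) : ℂ) = 1 - (p : ℂ) := by
    rw [← Complex.ofReal_mul, Real.mul_self_sqrt (by linarith)]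
    push_cast; ring
  rcases hO with h | h <;> subst h
  · simp [gad, krausMap, gadKraus, PauliX, Matrix.trace, Matrix.diag,
      Matrix.mul_apply, Fin.sum_univ_two, Fin.sum_univ_four, Matrix.conjTranspose_apply,
      Matrix.smul_apply, Complex.conj_ofReal, Matrix.add_apply, Matrix.vecMul,
      dotProduct, Matrix.vecHead, Matrix.vecTail]
    ring_nf
    linear_combination (ρ 0 1 + ρ 1 0) * (Real.sqrt (1 - ε) : ℂ) * (ha + hb)
  · simp [gad, krausMap, gadKraus, PauliY, Matrix.trace, Matrix.diag,
      Matrix.mul_apply, Fin.sum_univ_two, Fin.sum_univ_four, Matrix.conjTranspose_apply,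
      Matrix.smul_apply, Complex.conj_ofReal, Matrix.add_apply, Matrix.vecMul,
      dotProduct, Matrix.vecHead, Matrix.vecTail]
    ring_nf
    linear_combination Complex.I * (ρ 0 1 - ρ 1 0) * (Real.sqrt (1 - ε) : ℂ) * (ha + hb)
/-- The explicit retriever `D(σ) = (1/(2√(1−ε)))·tr[σO]·O = c₁·D₁ + c₂·D₂` (with the
stated Choi matrices) is a valid retriever for the observable `O ∈ {X, Y}` through the
generalized amplitude damping channel, with cost `|c₁| + |c₂| = 1/√(1−ε)`. -/
theorem stmt13 (p ε : ℝ) (hp0 : 0 ≤ p) (hp1 : p ≤ 1) (hε0 : 0 ≤ ε) (hε1 : ε < 1)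
    (O : MatC (Fin 2)) (hO : O = PauliX ∨ O = PauliY) :
    ∃ D₁ D₂ : MatC (Fin 2) →ₗ[ℂ] MatC (Fin 2),
      IsQuantumChannel D₁ ∧ IsQuantumChannel D₂ ∧
      choi D₁ = (1 / 2 : ℂ) • (Oᵀ ⊗ₖ O) +
        (1 / 2 : ℂ) • ((1 : MatC (Fin 2)) ⊗ₖ (1 : MatC (Fin 2))) ∧
      choi D₂ = -((1 / 2 : ℂ) • (Oᵀ ⊗ₖ O)) +
        (1 / 2 : ℂ) • ((1 : MatC (Fin 2)) ⊗ₖ (1 : MatC (Fin 2))) ∧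
      ∃ c₁ c₂ : ℝ, c₁ = 1 / (2 * Real.sqrt (1 - ε)) ∧ c₂ = -c₁ ∧
        (∀ σ : MatC (Fin 2),
          ((c₁ : ℂ) • D₁ + (c₂ : ℂ) • D₂) σ =
            ((1 / (2 * Real.sqrt (1 - ε)) : ℝ) : ℂ) • ((σ * O).trace • O)) ∧
        (∀ ρ : MatC (Fin 2),
          ((((c₁ : ℂ) • D₁ + (c₂ : ℂ) • D₂) (gad p ε ρ)) * O).trace = (ρ * O).trace) ∧
        |c₁| + |c₂| = 1 / Real.sqrt (1 - ε) := by


  obtain ⟨hOO, hKH, htr⟩ := pauli_facts O hO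
  have hd : 0 < Real.sqrt (1 - ε) := Real.sqrt_pos.2 (by linarith)
  have hdC : (Real.sqrt (1 - ε) : ℂ) ≠ 0 := by
    exact_mod_cast Complex.ofReal_ne_zero.2 (ne_of_gt hd)
  refine ⟨Dmap O (1/2), Dmap O (-(1/2)),
    Dmap_channel O _ (Or.inl rfl) hOO hKH htr,
    Dmap_channel O _ (Or.inr rfl) hOO hKH htr, ?_, ?_, ?_⟩
  · rw [choi_Dmap]
  · rw [choi_Dmap, neg_smul]
  refine ⟨1/(2*Real.sqrt (1-ε)), -(1/(2*Real.sqrt (1-ε))), rfl, rfl, ?_, ?_, ?_⟩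
  · intro σ
    simp only [LinearMap.add_apply, LinearMap.smul_apply, Dmap, LinearMap.coe_mk,
      AddHom.coe_mk, Complex.ofReal_neg]
    module
  · intro ρ
    have hform : (((1/(2*Real.sqrt (1-ε)) : ℝ) : ℂ) • Dmap O (1/2) +
        (((-(1/(2*Real.sqrt (1-ε))) : ℝ)) : ℂ) • Dmap O (-(1/2))) (gad p ε ρ) =
        ((1 / (2 * Real.sqrt (1 - ε)) : ℝ) : ℂ) • ((gad p ε ρ * O).trace • O) := by
      simp only [LinearMap.add_apply, LinearMap.smul_apply, Dmap, LinearMap.coe_mk,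
        AddHom.coe_mk, Complex.ofReal_neg]
      module
    rw [hform, gad_trace p ε hp0 hp1 O hO ρ, Matrix.smul_mul, Matrix.smul_mul,
      Matrix.trace_smul, Matrix.trace_smul, smul_eq_mul, smul_eq_mul, hOO,
      Matrix.trace_one]
    push_cast
    field_simp
    norm_num
    ring
  · rw [abs_neg, abs_of_pos (by positivity)]
    rw [← add_div]
    rw [eq_div_iff (ne_of_gt hd)]
    field_simp
    norm_num
end

section
/- Let O be a nonzero Hermitian d×d complex matrix with rank k < d and trace t ≠ 0, let P be the orthogonal projection onto the support (column space) of O and P⊥ = I − P the projection onto its kernel, and let Q be any Hermitian d×d matrix. Define the linear map E on d×d matrices by E(·) = (Q/t)·tr[P(·)P] + (k(I−Q)/(t(d−k)))·tr[P⊥(·)P⊥]. Then E is Hermitian-preserving, E(O) = Q, and E(I) = (k/t)·I (so E is unit-scaling). -/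
open Matrix
open scoped Kronecker ComplexOrder

/-- Case 1 construction in the proof of Theorem 1: for a nonzero Hermitian observable
`O` with rank `k < d` and trace `t ≠ 0`, with `P` the orthogonal projection onto the
support of `O` (`P⊥ = 1 − P`), the map
`E(X) = (Q/t)·tr[P X P] + (k(I−Q)/(t(d−k)))·tr[P⊥ X P⊥]`
is Hermitian-preserving, satisfies `E(O) = Q`, and is unit-scaling with
`E(I) = (k/t)·I`. -/
theorem stmt18 (d k : ℕ) (O Q P : MatC (Fin d))
    (hO : O.IsHermitian) (hO0 : O ≠ 0) (hrank : O.rank = k) (hkd : k < d)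
    (ht0 : O.trace ≠ 0) (hQ : Q.IsHermitian)
    (hPproj : P * P = P) (hPH : P.IsHermitian)
    (hPsupp : LinearMap.range P.mulVecLin = LinearMap.range O.mulVecLin)
    (E : MatC (Fin d) →ₗ[ℂ] MatC (Fin d))
    (hE : ∀ X : MatC (Fin d), E X =
      (O.trace)⁻¹ • ((P * X * P).trace • Q) +
      ((k : ℂ) / (O.trace * ((d : ℂ) - (k : ℂ)))) •
        (((1 - P) * X * (1 - P)).trace • (1 - Q))) :
    IsHermitianPreserving E ∧ E O = Q ∧ E 1 = ((k : ℂ) / O.trace) • 1 := by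
  -- P fixes the range of O
  have hfix : ∀ v ∈ LinearMap.range O.mulVecLin, P *ᵥ v = v := by
    rw [← hPsupp]
    rintro _ ⟨u, rfl⟩
    simp only [Matrix.mulVecLin_apply, Matrix.mulVec_mulVec, hPproj]
  have hPO : P * O = O := by
    ext i j
    have h := congrFun (hfix (O *ᵥ Pi.single j 1)
      ⟨Pi.single j 1, by simp [Matrix.mulVecLin_apply]⟩) i
    simpa [Matrix.mulVec_mulVec, Matrix.mulVec_single, Matrix.mul_apply, Matrix.mulVec, dotProduct, Pi.single_apply] using h
  have hOP : O * P = O := by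
    calc O * P = (P * O)ᴴ := by rw [conjTranspose_mul, hO.eq, hPH.eq]
    _ = O := by rw [hPO, hO.eq]
  have hPOP : P * O * P = O := by rw [hPO, hOP]
  have h1PO : (1 - P) * O = 0 := by rw [sub_mul, one_mul, hPO, sub_self]
  have h1P1 : (1 - P) * (1 - P) = 1 - P := by
    rw [sub_mul, one_mul, mul_sub, mul_one, hPproj, sub_self, sub_zero]
  -- trace of P equals k
  have trP : P.trace = (k : ℂ) := by
    have hproj : LinearMap.IsProj (LinearMap.range P.mulVecLin) P.mulVecLin := by
      constructor
      · intro x; exact LinearMap.mem_range_self _ x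
      · rintro x ⟨u, rfl⟩
        simp only [Matrix.mulVecLin_apply, Matrix.mulVec_mulVec, hPproj]
    have h2 := LinearMap.IsProj.trace hproj
    rw [LinearMap.trace_eq_matrix_trace ℂ (Pi.basisFun ℂ (Fin d))] at h2
    have h3 : (LinearMap.toMatrix (Pi.basisFun ℂ (Fin d)) (Pi.basisFun ℂ (Fin d)))
        P.mulVecLin = P := by
      ext i j
      have hv : (fun j' => if j' = j then (1:ℂ) else 0) = Pi.single j 1 := by
        ext j'; simp [Pi.single_apply]
      simp [LinearMap.toMatrix_apply, hv, Matrix.mulVec_single]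
    rw [h3] at h2
    rw [h2]
    congr 1
    rw [show Module.finrank ℂ ↥(LinearMap.range P.mulVecLin) = P.rank from rfl,
      Matrix.rank, hPsupp, ← Matrix.rank, hrank]
  have tr1P : (1 - P).trace = (d : ℂ) - (k : ℂ) := by
    rw [Matrix.trace_sub, trP, Matrix.trace_one]
    simp
  have hdk : (d : ℂ) - (k : ℂ) ≠ 0 := by
    rw [sub_ne_zero]
    exact_mod_cast (Nat.ne_of_gt hkd)
  have hstart : star O.trace = O.trace := by
    rw [← Matrix.trace_conjTranspose, hO.eq]
  refine ⟨?_, ?_, ?_⟩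
  · -- Hermitian preserving
    intro X hX
    have hPXP : (P * X * P).IsHermitian := by
      unfold Matrix.IsHermitian
      rw [conjTranspose_mul, conjTranspose_mul, hX.eq, hPH.eq, mul_assoc]
    have h1PX : ((1 - P) * X * (1 - P)).IsHermitian := by
      have h1P : (1 - P).IsHermitian := by
        unfold Matrix.IsHermitian
        rw [conjTranspose_sub, conjTranspose_one, hPH.eq]
      unfold Matrix.IsHermitian
      rw [conjTranspose_mul, conjTranspose_mul, hX.eq, h1P.eq, mul_assoc]
    have hs1 : star ((P * X * P).trace) = (P * X * P).trace := by
      rw [← Matrix.trace_conjTranspose, hPXP.eq]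
    have hs2 : star (((1 - P) * X * (1 - P)).trace) = ((1 - P) * X * (1 - P)).trace := by
      rw [← Matrix.trace_conjTranspose, h1PX.eq]
    unfold Matrix.IsHermitian
    rw [hE X, conjTranspose_add, conjTranspose_smul, conjTranspose_smul,
      conjTranspose_smul, conjTranspose_smul, hQ.eq, conjTranspose_sub,
      conjTranspose_one, hQ.eq, hs1, hs2, star_inv₀, hstart, star_div₀, star_mul',
      star_sub, hstart]
    simp [star_natCast]
  · -- E O = Q
    rw [hE O, hPOP, h1PO, Matrix.zero_mul, Matrix.trace_zero, zero_smul, smul_zero,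
      add_zero, smul_smul, inv_mul_cancel₀ ht0, one_smul]
  · -- E 1 = (k/t) • 1
    rw [hE 1, Matrix.mul_one, hPproj, Matrix.mul_one, h1P1, trP, tr1P,
      smul_smul, smul_smul]
    have e1 : (O.trace)⁻¹ * (k : ℂ) = (k : ℂ) / O.trace := by
      rw [div_eq_mul_inv, mul_comm]
    have e2 : (k : ℂ) / (O.trace * ((d : ℂ) - (k : ℂ))) * ((d : ℂ) - (k : ℂ))
        = (k : ℂ) / O.trace := by
      field_simp
    rw [e1, e2, ← smul_add]
    congr 1
    abel
end
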